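/- arXiv:1709.07996 — 2 statements merged into one kernel-verified Lean document; each statement's English description precedes it below -/
import Mathlib

section
/- For z ∈ Ĩ_n, every atom w ∈ A(z) has length ℓ(w) = ℓ̂(z) := (ℓ(z) + ℓ'(z))/2. -/
open Finset

/-- `w` is an element of the affine symmetric group `S̃_n`: a bijection `ℤ → ℤ` with
`w (i + n) = w i + n` for all `i` and `∑_{i=1}^n w i = n (n+1)/2`. -/
def IsAffine (n : ℕ) (w : Equiv.Perm ℤ) : Prop :=
  (∀ i : ℤ, w (i + n) = w i + n) ∧ ∑ i ∈ Finset.Icc (1 : ℤ) (n : ℤ), (w i - i) = 0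

/-- The Coxeter length of `w ∈ S̃_n`: the number of inversions `(i, j)`, `i < j`,
`w i > w j`, counted up to the equivalence `(i,j) ∼ (i+n, j+n)` (representatives with
`i ∈ [n]`). -/
noncomputable def affLen (n : ℕ) (w : Equiv.Perm ℤ) : ℕ :=
  Nat.card {p : ℤ × ℤ // 1 ≤ p.1 ∧ p.1 ≤ (n : ℤ) ∧ p.1 < p.2 ∧ w p.2 < w p.1}

/-- The absolute length of an involution `z ∈ Ĩ_n`: the number of 2-cycles
`(i, j)` with `i < j = z i`, counted up to the equivalence `(i,j) ∼ (i+n, j+n)`. -/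
noncomputable def absLen (n : ℕ) (z : Equiv.Perm ℤ) : ℕ :=
  Nat.card {p : ℤ × ℤ // 1 ≤ p.1 ∧ p.1 ≤ (n : ℤ) ∧ p.1 < p.2 ∧ z p.1 = p.2}

/-- The underlying function of the reflection `t_{i j}`: it sends `i + m n ↦ j + m n` and
`j + m n ↦ i + m n` for all `m`, fixing everything else. -/
def tFun (n : ℕ) (i j x : ℤ) : ℤ :=
  if (n : ℤ) ∣ x - i then x + (j - i) else if (n : ℤ) ∣ x - j then x - (j - i) else x

theorem tFun_comp (n : ℕ) (i j x : ℤ) : tFun n j i (tFun n i j x) = x := by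
  unfold tFun
  by_cases h1 : (n : ℤ) ∣ x - i
  · rw [if_pos h1]
    have c1 : (n : ℤ) ∣ x + (j - i) - j := by
      have e : x + (j - i) - j = x - i := by ring
      rw [e]; exact h1
    rw [if_pos c1]; ring
  · rw [if_neg h1]
    by_cases h2 : (n : ℤ) ∣ x - j
    · rw [if_pos h2]
      have c1 : ¬ (n : ℤ) ∣ x - (j - i) - j := by
        intro hc
        apply h1
        have e : x - i = 2 * (x - j) - (x - (j - i) - j) := by ring
        rw [e]
        exact dvd_sub (Dvd.dvd.mul_left h2 2) hc
      have c2 : (n : ℤ) ∣ x - (j - i) - i := by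
        have e : x - (j - i) - i = x - j := by ring
        rw [e]; exact h2
      rw [if_neg c1, if_pos c2]; ring
    · simp only [if_neg h1, if_neg h2]

/-- The reflection `t_{i j} ∈ S̃_n`. -/
def tPerm (n : ℕ) (i j : ℤ) : Equiv.Perm ℤ :=
  ⟨tFun n i j, tFun n j i, fun x => tFun_comp n i j x, fun x => tFun_comp n j i x⟩

/-- The simple generator `s_i = t_{i, i+1} ∈ S̃_n`. -/
def sPerm (n : ℕ) (i : ℤ) : Equiv.Perm ℤ := tPerm n i (i + 1)

/-- `D` is the Demazure (0-Hecke) product on the affine symmetric group `S̃_n`: the unique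
associative product with `w ∘ s_i = w` if `ℓ(w s_i) < ℓ(w)` and `w ∘ s_i = w s_i` if
`ℓ(w s_i) > ℓ(w)`. -/
def IsDemazure (n : ℕ) (D : Equiv.Perm ℤ → Equiv.Perm ℤ → Equiv.Perm ℤ) : Prop :=
  (∀ u v w : Equiv.Perm ℤ, IsAffine n u → IsAffine n v → IsAffine n w →
    D (D u v) w = D u (D v w)) ∧
  (∀ u v : Equiv.Perm ℤ, IsAffine n u → IsAffine n v → IsAffine n (D u v)) ∧
  (∀ w : Equiv.Perm ℤ, IsAffine n w → D w 1 = w ∧ D 1 w = w) ∧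
  (∀ w : Equiv.Perm ℤ, IsAffine n w → ∀ i : ℤ,
    (affLen n (w * sPerm n i) < affLen n w → D w (sPerm n i) = w) ∧
    (affLen n w < affLen n (w * sPerm n i) → D w (sPerm n i) = w * sPerm n i))

/-- `w` is an atom of the involution `z ∈ Ĩ_n` (relative to the Demazure product `D`):
`w` has minimal length among all `v ∈ S̃_n` with `z = v⁻¹ ∘ v`. -/
def IsAtomOf (n : ℕ) (D : Equiv.Perm ℤ → Equiv.Perm ℤ → Equiv.Perm ℤ)
    (z w : Equiv.Perm ℤ) : Prop :=
  IsAffine n w ∧ D w⁻¹ w = z ∧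
    ∀ v : Equiv.Perm ℤ, IsAffine n v → D v⁻¹ v = z → affLen n w ≤ affLen n v

namespace AtomAux

variable {n : ℕ}

lemma Npos (hn : 2 ≤ n) : (0:ℤ) < (n:ℤ) := by exact_mod_cast Nat.lt_of_lt_of_le (by norm_num) hn

lemma dvd_small_eq (hn : 2 ≤ n) {d : ℤ} (h : (n:ℤ) ∣ d) (h1 : -(n:ℤ) < d) (h2 : d < n) :
    d = 0 := by
  rcases h with ⟨k, rfl⟩
  have hN := Npos hn
  rcases lt_trichotomy k 0 with hk|hk|hk
  · have : k ≤ -1 := by omega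
    nlinarith
  · simp [hk]
  · have : 1 ≤ k := by omega
    nlinarith

/-- normalization to `[1,n]` -/
def nrm (n : ℕ) (a : ℤ) : ℤ := (a - 1) % (n : ℤ) + 1

lemma nrm_dvd (a : ℤ) : (n : ℤ) ∣ nrm n a - a := by
  have h : (a - 1) % (n:ℤ) = a - 1 - (n:ℤ) * ((a-1) / (n:ℤ)) := Int.emod_def _ _
  refine ⟨-((a-1) / (n:ℤ)), ?_⟩
  unfold nrm
  rw [h]; ring

lemma nrm_one_le (hn : 2 ≤ n) (a : ℤ) : 1 ≤ nrm n a := by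
  have := Int.emod_nonneg (a - 1) (Npos hn).ne'
  unfold nrm; omega

lemma nrm_le (hn : 2 ≤ n) (a : ℤ) : nrm n a ≤ n := by
  have := Int.emod_lt_of_pos (a - 1) (Npos hn)
  unfold nrm; omega

lemma nrm_eq_of (hn : 2 ≤ n) {a b : ℤ} (h1 : 1 ≤ b) (h2 : b ≤ n) (h : (n:ℤ) ∣ b - a) :
    nrm n a = b := by
  have hd : (n:ℤ) ∣ nrm n a - b := by
    have := dvd_sub (nrm_dvd a (n := n)) h
    simpa using this
  have := dvd_small_eq hn hd (by have := nrm_one_le hn a; omega)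
    (by have := nrm_le hn a; omega)
  omega

lemma nrm_self (hn : 2 ≤ n) {a : ℤ} (h1 : 1 ≤ a) (h2 : a ≤ n) : nrm n a = a :=
  nrm_eq_of hn h1 h2 ⟨0, by ring⟩

lemma nrm_shift (hn : 2 ≤ n) (a m : ℤ) : nrm n (a + m * n) = nrm n a := by
  refine nrm_eq_of hn (nrm_one_le hn a) (nrm_le hn a) ?_
  have := nrm_dvd (n := n) a
  rcases this with ⟨k, hk⟩
  exact ⟨k - m, by linarith [hk]⟩

end AtomAux
namespace AtomAux
variable {n : ℕ}

lemma s_apply (i x : ℤ) : sPerm n i x = tFun n i (i+1) x := rfl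

lemma dvd_excl (hn : 2 ≤ n) {x i : ℤ} (h1 : (n:ℤ) ∣ x - i) (h2 : (n:ℤ) ∣ x - (i+1)) : False := by
  have : (n:ℤ) ∣ 1 := by
    have := dvd_sub h1 h2
    simpa using this
  have := Int.le_of_dvd (by norm_num) this
  have := Npos hn
  omega

lemma s_up {i x : ℤ} (h : (n:ℤ) ∣ x - i) : sPerm n i x = x + 1 := by
  rw [s_apply]; unfold tFun; rw [if_pos h]; ring

lemma s_down (hn : 2 ≤ n) {i x : ℤ} (h : (n:ℤ) ∣ x - (i+1)) : sPerm n i x = x - 1 := by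
  rw [s_apply]; unfold tFun
  rw [if_neg (fun hc => dvd_excl hn hc h), if_pos h]; ring

lemma s_fix {i x : ℤ} (h1 : ¬ (n:ℤ) ∣ x - i) (h2 : ¬ (n:ℤ) ∣ x - (i+1)) :
    sPerm n i x = x := by
  rw [s_apply]; unfold tFun; rw [if_neg h1, if_neg h2]

lemma dvd_shift {x i m : ℤ} : (n:ℤ) ∣ (x + m * n) - i ↔ (n:ℤ) ∣ x - i := by
  constructor <;> intro h
  · rcases h with ⟨k, hk⟩; exact ⟨k - m, by linarith⟩
  · rcases h with ⟨k, hk⟩; exact ⟨k + m, by linarith⟩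

lemma s_shift (hn : 2 ≤ n) (i x m : ℤ) : sPerm n i (x + m * n) = sPerm n i x + m * n := by
  by_cases h1 : (n:ℤ) ∣ x - i
  · rw [s_up (dvd_shift.mpr h1), s_up h1]; ring
  · by_cases h2 : (n:ℤ) ∣ x - (i+1)
    · rw [s_down hn (dvd_shift.mpr h2), s_down hn h2]; ring
    · rw [s_fix (fun h => h1 (dvd_shift.mp h)) (fun h => h2 (dvd_shift.mp h)),
        s_fix h1 h2]

lemma s_mul_self (hn : 2 ≤ n) (i : ℤ) : sPerm n i * sPerm n i = 1 := by
  apply Equiv.ext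
  intro x
  simp only [Equiv.Perm.mul_apply, Equiv.Perm.one_apply]
  by_cases h1 : (n:ℤ) ∣ x - i
  · rw [s_up h1, s_down hn (by rcases h1 with ⟨k, hk⟩; exact ⟨k, by linarith⟩)]
    ring
  · by_cases h2 : (n:ℤ) ∣ x - (i+1)
    · rw [s_down hn h2, s_up (by rcases h2 with ⟨k,hk⟩ : (n:ℤ) ∣ x - (i+1); exact ⟨k, by linarith⟩)]; ring
    · rw [s_fix h1 h2, s_fix h1 h2]

lemma s_inv (hn : 2 ≤ n) (i : ℤ) : (sPerm n i)⁻¹ = sPerm n i := by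
  exact inv_eq_of_mul_eq_one_right (s_mul_self hn i)

lemma s_invol (hn : 2 ≤ n) (i x : ℤ) : sPerm n i (sPerm n i x) = x := by
  have := s_mul_self hn i
  have := congrArg (fun e => Equiv.toFun e x) this
  simpa using this

/-- order behaviour: if not the special adjacent pair, s preserves order -/
lemma s_lt (hn : 2 ≤ n) {i a b : ℤ} (hab : a < b)
    (hsp : ¬ ((n:ℤ) ∣ a - i ∧ b = a + 1)) : sPerm n i a < sPerm n i b := by
  have hN := Npos hn
  by_cases ha1 : (n:ℤ) ∣ a - i
  · rw [s_up ha1]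
    by_cases hb1 : (n:ℤ) ∣ b - i
    · rw [s_up hb1]; omega
    · by_cases hb2 : (n:ℤ) ∣ b - (i+1)
      · rw [s_down hn hb2]
        -- b - a ≡ 1 mod n, b > a, b ≠ a+1 so b - a ≥ n+1
        have hd : (n:ℤ) ∣ (b - a - 1) := by
          have := dvd_sub hb2 ha1
          have e : b - (i+1) - (a - i) = b - a - 1 := by ring
          rwa [e] at this
        rcases hd with ⟨k, hk⟩
        have hk0 : 0 < k := by
          rcases lt_trichotomy k 0 with h|h|h
          · nlinarith
          · exfalso; apply hsp; refine ⟨ha1, ?_⟩; rw [h] at hk; simp at hk; linarith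
          · exact h
        nlinarith
      · rw [s_fix hb1 hb2]
        have : b ≠ a + 1 := by
          intro h; apply hb2
          rcases ha1 with ⟨k, hk⟩; exact ⟨k, by rw [h]; linarith⟩
        omega
  · by_cases ha2 : (n:ℤ) ∣ a - (i+1)
    · rw [s_down hn ha2]
      have hb : b - 1 ≤ sPerm n i b := by
        by_cases hb1 : (n:ℤ) ∣ b - i
        · rw [s_up hb1]; omega
        · by_cases hb2 : (n:ℤ) ∣ b - (i+1)
          · rw [s_down hn hb2]
          · rw [s_fix hb1 hb2]; omega
      omega
    · rw [s_fix ha1 ha2]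
      by_cases hb1 : (n:ℤ) ∣ b - i
      · rw [s_up hb1]; omega
      · by_cases hb2 : (n:ℤ) ∣ b - (i+1)
        · rw [s_down hn hb2]
          have : b ≠ a + 1 := by
            intro h; apply ha1
            rcases hb2 with ⟨k, hk⟩; refine ⟨k, ?_⟩; rw [h] at hk; linarith
          omega
        · rw [s_fix hb1 hb2]; omega

/-- full case split for a < b -/
lemma s_cases (hn : 2 ≤ n) {i a b : ℤ} (hab : a < b) :
    sPerm n i a < sPerm n i b ∨
      ((n:ℤ) ∣ a - i ∧ b = a + 1 ∧ sPerm n i a = b ∧ sPerm n i b = a) := by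
  by_cases h : (n:ℤ) ∣ a - i ∧ b = a + 1
  · right
    refine ⟨h.1, h.2, ?_, ?_⟩
    · rw [s_up h.1]; omega
    · rw [h.2, s_down hn (by rcases h.1 with ⟨k,hk⟩; exact ⟨k, by linarith⟩)]; ring
  · left; exact s_lt hn hab h

end AtomAux

namespace AtomAux
variable {n : ℕ}

lemma perm_apply_inv_self (w : Equiv.Perm ℤ) (x : ℤ) : w (w⁻¹ x) = x := by
  simp only [Equiv.Perm.coe_inv, Equiv.apply_symm_apply]

lemma perm_inv_apply_self (w : Equiv.Perm ℤ) (x : ℤ) : w⁻¹ (w x) = x := by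
  simp only [Equiv.Perm.coe_inv, Equiv.symm_apply_apply]

/-- shifts by multiples of n -/
lemma aff_shift {w : Equiv.Perm ℤ} (hw : IsAffine n w) (x m : ℤ) :
    w (x + m * n) = w x + m * n := by
  induction m using Int.induction_on with
  | zero => simp
  | succ k ih =>
      have : x + (k + 1) * n = (x + k * n) + n := by ring
      rw [this, hw.1, ih]; ring
  | pred k ih =>
      have e1 : x + (-(k:ℤ) - 1) * n + (n:ℤ) = x + (-k) * n := by ring
      have h2 := hw.1 (x + (-(k:ℤ) - 1) * n)
      rw [e1, ih] at h2
      linarith [h2]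

lemma aff_inj_shift {w : Equiv.Perm ℤ} (hw : IsAffine n w) {x y m : ℤ}
    (h : w x = w y + m * n) : x = y + m * n := by
  have : w x = w (y + m * n) := by rw [aff_shift hw, h]
  exact w.injective this

lemma aff_one : IsAffine n 1 := by
  constructor
  · intro i; simp
  · simp

/-- key reindexing: for n-periodic f, sum over window is permutation-invariant -/
lemma aff_sum_reindex (hn : 2 ≤ n) {w : Equiv.Perm ℤ} (hw : IsAffine n w)
    (f : ℤ → ℤ) (hf : ∀ x m, f (x + m * n) = f x) :
    ∑ i ∈ Finset.Icc (1:ℤ) (n:ℤ), f (w i) = ∑ i ∈ Finset.Icc (1:ℤ) (n:ℤ), f i := by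
  have hwinv : ∀ x m : ℤ, w⁻¹ (x + m * n) = w⁻¹ x + m * n := by
    intro x m
    apply w.injective
    rw [perm_apply_inv_self, aff_shift hw, perm_apply_inv_self]
  refine Finset.sum_nbij' (fun i => nrm n (w i)) (fun j => nrm n (w⁻¹ j)) ?_ ?_ ?_ ?_ ?_
  · intro a _
    simp only [Finset.mem_Icc]
    exact ⟨nrm_one_le hn _, nrm_le hn _⟩
  · intro a _
    simp only [Finset.mem_Icc]
    exact ⟨nrm_one_le hn _, nrm_le hn _⟩
  · intro a ha
    simp only [Finset.mem_Icc] at ha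
    rcases nrm_dvd (n := n) (w a) with ⟨k, hk⟩
    have h1 : nrm n (w a) = w a + k * n := by linarith
    show nrm n (w⁻¹ (nrm n (w a))) = a
    rw [h1, hwinv, perm_inv_apply_self]
    rw [nrm_shift hn, nrm_self hn ha.1 ha.2]
  · intro a ha
    simp only [Finset.mem_Icc] at ha
    rcases nrm_dvd (n := n) (w⁻¹ a) with ⟨k, hk⟩
    have h1 : nrm n (w⁻¹ a) = w⁻¹ a + k * n := by linarith
    show nrm n (w (nrm n (w⁻¹ a))) = a
    rw [h1, aff_shift hw, perm_apply_inv_self]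
    rw [nrm_shift hn, nrm_self hn ha.1 ha.2]
  · intro a _
    rcases nrm_dvd (n := n) (w a) with ⟨k, hk⟩
    have h1 : nrm n (w a) = w a + k * n := by linarith
    show f (w a) = f (nrm n (w a))
    rw [h1, hf]

lemma aff_mul (hn : 2 ≤ n) {u v : Equiv.Perm ℤ} (hu : IsAffine n u) (hv : IsAffine n v) :
    IsAffine n (u * v) := by
  constructor
  · intro i
    simp only [Equiv.Perm.mul_apply]
    rw [hv.1, hu.1]
  · have key : ∑ i ∈ Finset.Icc (1:ℤ) (n:ℤ), (u (v i) - v i) = 0 := by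
      have := aff_sum_reindex hn hv (fun x => u x - x) (fun x m => by
        show u (x + m * n) - (x + m * n) = u x - x
        rw [aff_shift hu]; ring)
      rw [this]; exact hu.2
    have : ∑ i ∈ Finset.Icc (1:ℤ) (n:ℤ), ((u * v) i - i)
        = ∑ i ∈ Finset.Icc (1:ℤ) (n:ℤ), ((u (v i) - v i) + (v i - i)) := by
      apply Finset.sum_congr rfl
      intro i _
      simp only [Equiv.Perm.mul_apply]; ring
    rw [this, Finset.sum_add_distrib, key, hv.2]
    norm_num

lemma aff_inv (hn : 2 ≤ n) {w : Equiv.Perm ℤ} (hw : IsAffine n w) : IsAffine n w⁻¹ := by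
  have hwinv : ∀ x : ℤ, w⁻¹ (x + n) = w⁻¹ x + n := by
    intro x
    apply w.injective
    rw [perm_apply_inv_self]
    have := aff_shift hw (w⁻¹ x) 1
    simp only [one_mul] at this
    rw [this, perm_apply_inv_self]
  constructor
  · exact hwinv
  · have h1 : ∀ x m : ℤ, w⁻¹ (x + m * n) - (x + m * n) = w⁻¹ x - x := by
      intro x m
      induction m using Int.induction_on with
      | zero => simp
      | succ k ih => rw [show x + ((k:ℤ)+1) * n = (x + k * n) + n by ring, hwinv]; omega
      | pred k ih =>
          have e1 : x + (-(k:ℤ) - 1) * n + (n:ℤ) = x + (-k) * n := by ring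
          have h2 := hwinv (x + (-(k:ℤ) - 1) * n)
          rw [e1] at h2
          linarith [ih, h2]
    have := aff_sum_reindex hn hw (fun x => w⁻¹ x - x) (fun x m => h1 x m)
    have h2 : ∑ i ∈ Finset.Icc (1:ℤ) (n:ℤ), (w⁻¹ (w i) - w i) = 0 := by
      have h3 : ∑ i ∈ Finset.Icc (1:ℤ) (n:ℤ), (w⁻¹ (w i) - w i)
          = - ∑ i ∈ Finset.Icc (1:ℤ) (n:ℤ), (w i - i) := by
        rw [← Finset.sum_neg_distrib]
        apply Finset.sum_congr rfl
        intro i _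
        rw [perm_inv_apply_self]; ring
      rw [h3, hw.2]; ring
    rw [this] at h2
    exact h2

lemma aff_s (hn : 2 ≤ n) (i : ℤ) : IsAffine n (sPerm n i) := by
  constructor
  · intro x
    have := s_shift hn i x 1
    simpa using this
  · have hpt : ∀ x : ℤ, 1 ≤ x → x ≤ n → sPerm n i x - x =
        (if x = nrm n i then 1 else if x = nrm n (i+1) then -1 else 0) := by
      intro x h1 h2
      by_cases e1 : x = nrm n i
      · rw [if_pos e1]
        have : (n:ℤ) ∣ x - i := by
          rcases nrm_dvd (n := n) i with ⟨k, hk⟩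
          exact ⟨k, by rw [e1]; linarith⟩
        rw [s_up this]; ring
      · rw [if_neg e1]
        by_cases e2 : x = nrm n (i+1)
        · rw [if_pos e2]
          have : (n:ℤ) ∣ x - (i+1) := by
            rcases nrm_dvd (n := n) (i+1) with ⟨k, hk⟩
            exact ⟨k, by rw [e2]; linarith⟩
          rw [s_down hn this]; ring
        · have d1 : ¬ (n:ℤ) ∣ x - i := by
            intro hc
            exact e1 ((nrm_eq_of hn h1 h2 hc).symm)
          have d2 : ¬ (n:ℤ) ∣ x - (i+1) := by
            intro hc
            exact e2 ((nrm_eq_of hn h1 h2 hc).symm)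
          rw [if_neg e2, s_fix d1 d2]; ring
    have hxy : nrm n i ≠ nrm n (i+1) := by
      intro hc
      rcases nrm_dvd (n := n) i with ⟨k, hk⟩
      rcases nrm_dvd (n := n) (i+1) with ⟨l, hl⟩
      rw [hc] at hk
      have A : (n:ℤ) ∣ nrm n (i+1) - i := ⟨k, hk⟩
      have B : (n:ℤ) ∣ nrm n (i+1) - (i+1) := ⟨l, hl⟩
      exact dvd_excl hn A B
    rw [Finset.sum_congr rfl (fun x hx => by
      simp only [Finset.mem_Icc] at hx
      exact hpt x hx.1 hx.2)]
    have hsplit : ∀ x : ℤ, (if x = nrm n i then (1:ℤ) else if x = nrm n (i+1) then -1 else 0)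
        = (if x = nrm n i then (1:ℤ) else 0) + (if x = nrm n (i+1) then (-1:ℤ) else 0) := by
      intro x
      split_ifs with h1 h2
      · exact absurd (h1.symm.trans h2) hxy
      · ring
      · ring
      · ring
    rw [Finset.sum_congr rfl (fun x _ => hsplit x), Finset.sum_add_distrib,
      Finset.sum_ite_eq' (Finset.Icc (1:ℤ) (n:ℤ)),
      Finset.sum_ite_eq' (Finset.Icc (1:ℤ) (n:ℤ)),
      if_pos (by simp only [Finset.mem_Icc]; exact ⟨nrm_one_le hn _, nrm_le hn _⟩),
      if_pos (by simp only [Finset.mem_Icc]; exact ⟨nrm_one_le hn _, nrm_le hn _⟩)]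
    ring

/-- normalize a pair by the shift determined by its first coordinate -/
def pnrm (n : ℕ) (q : ℤ × ℤ) : ℤ × ℤ := (nrm n q.1, q.2 + (nrm n q.1 - q.1))

lemma pnrm_spec (q : ℤ × ℤ) : ∃ m : ℤ, pnrm n q = (q.1 + m * n, q.2 + m * n) := by
  rcases nrm_dvd (n := n) q.1 with ⟨k, hk⟩
  refine ⟨k, ?_⟩
  unfold pnrm
  rw [Prod.mk.injEq]
  constructor <;> linarith

lemma pnrm_id (hn : 2 ≤ n) {q : ℤ × ℤ} (h1 : 1 ≤ q.1) (h2 : q.1 ≤ n) : pnrm n q = q := by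
  unfold pnrm
  rw [nrm_self hn h1 h2]
  simp

lemma pnrm_shift (hn : 2 ≤ n) (q : ℤ × ℤ) (m : ℤ) :
    pnrm n (q.1 + m * n, q.2 + m * n) = pnrm n q := by
  unfold pnrm
  simp only [nrm_shift hn]
  rw [Prod.mk.injEq]
  exact ⟨rfl, by ring⟩

lemma pnrm_bounds (hn : 2 ≤ n) (q : ℤ × ℤ) :
    1 ≤ (pnrm n q).1 ∧ (pnrm n q).1 ≤ n := ⟨nrm_one_le hn _, nrm_le hn _⟩

lemma card_bij (hn : 2 ≤ n) (P Q : ℤ × ℤ → Prop) (f g : ℤ × ℤ → ℤ × ℤ)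
    (hfg : ∀ p, P p → g (f p) = p) (hgf : ∀ p, Q p → f (g p) = p)
    (hPQ : ∀ p, P p → Q (f p)) (hQP : ∀ p, Q p → P (g p))
    (hfs : ∀ p m, f (p.1 + m * n, p.2 + m * n) = ((f p).1 + m * n, (f p).2 + m * n))
    (hgs : ∀ p m, g (p.1 + m * n, p.2 + m * n) = ((g p).1 + m * n, (g p).2 + m * n))
    (hPs : ∀ p m, P p → P (p.1 + m * n, p.2 + m * n))
    (hQs : ∀ p m, Q p → Q (p.1 + m * n, p.2 + m * n)) :
    Nat.card {p : ℤ × ℤ // 1 ≤ p.1 ∧ p.1 ≤ (n:ℤ) ∧ P p}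
      = Nat.card {p : ℤ × ℤ // 1 ≤ p.1 ∧ p.1 ≤ (n:ℤ) ∧ Q p} := by
  have keyQ : ∀ p : ℤ × ℤ, P p → 1 ≤ (pnrm n (f p)).1 ∧ (pnrm n (f p)).1 ≤ (n:ℤ) ∧ Q (pnrm n (f p)) := by
    intro p hp
    rcases pnrm_spec (n := n) (f p) with ⟨m, hm⟩
    refine ⟨(pnrm_bounds hn _).1, (pnrm_bounds hn _).2, ?_⟩
    rw [hm]
    exact hQs _ m (hPQ p hp)
  have keyP : ∀ p : ℤ × ℤ, Q p → 1 ≤ (pnrm n (g p)).1 ∧ (pnrm n (g p)).1 ≤ (n:ℤ) ∧ P (pnrm n (g p)) := by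
    intro p hp
    rcases pnrm_spec (n := n) (g p) with ⟨m, hm⟩
    refine ⟨(pnrm_bounds hn _).1, (pnrm_bounds hn _).2, ?_⟩
    rw [hm]
    exact hPs _ m (hQP p hp)
  apply Nat.card_congr
  refine ⟨fun p => ⟨pnrm n (f p.1), keyQ p.1 p.2.2.2⟩,
          fun p => ⟨pnrm n (g p.1), keyP p.1 p.2.2.2⟩, ?_, ?_⟩
  · rintro ⟨p, h1, h2, hp⟩
    apply Subtype.ext
    show pnrm n (g (pnrm n (f p))) = p
    rcases pnrm_spec (n := n) (f p) with ⟨m, hm⟩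
    rw [hm, hgs, hfg p hp]
    rw [pnrm_shift hn (p.1, p.2) m]
    rw [show (p.1, p.2) = p from rfl]
    exact pnrm_id hn h1 h2
  · rintro ⟨p, h1, h2, hp⟩
    apply Subtype.ext
    show pnrm n (f (pnrm n (g p))) = p
    rcases pnrm_spec (n := n) (g p) with ⟨m, hm⟩
    rw [hm, hfs, hgf p hp]
    rw [pnrm_shift hn (p.1, p.2) m]
    rw [show (p.1, p.2) = p from rfl]
    exact pnrm_id hn h1 h2

lemma card_succ (P sp : ℤ × ℤ → Prop) (p₀ : ℤ × ℤ)
    (h₀ : 1 ≤ p₀.1 ∧ p₀.1 ≤ (n:ℤ) ∧ sp p₀)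
    (huniq : ∀ p : ℤ × ℤ, 1 ≤ p.1 → p.1 ≤ (n:ℤ) → sp p → p = p₀)
    (hdisj : ∀ p, P p → ¬ sp p)
    (hfin : Finite {p : ℤ × ℤ // 1 ≤ p.1 ∧ p.1 ≤ (n:ℤ) ∧ P p}) :
    Nat.card {p : ℤ × ℤ // 1 ≤ p.1 ∧ p.1 ≤ (n:ℤ) ∧ (P p ∨ sp p)}
      = Nat.card {p : ℤ × ℤ // 1 ≤ p.1 ∧ p.1 ≤ (n:ℤ) ∧ P p} + 1 := by
  classical
  have e : {p : ℤ × ℤ // 1 ≤ p.1 ∧ p.1 ≤ (n:ℤ) ∧ (P p ∨ sp p)}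
      ≃ {p : ℤ × ℤ // 1 ≤ p.1 ∧ p.1 ≤ (n:ℤ) ∧ P p} ⊕ Unit := by
    refine Equiv.ofBijective
      (fun p => if h : P p.1 then Sum.inl ⟨p.1, p.2.1, p.2.2.1, h⟩ else Sum.inr Unit.unit) ⟨?_, ?_⟩
    · rintro ⟨p, hp1, hp2, hp⟩ ⟨q, hq1, hq2, hq⟩ h
      by_cases h1 : P p <;> by_cases h2 : P q <;> simp [h1, h2] at h
      · exact Subtype.ext h
      · apply Subtype.ext
        show p = q
        have hsp : sp p := hp.resolve_left h1
        have hsq : sp q := hq.resolve_left h2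
        rw [huniq p hp1 hp2 hsp, huniq q hq1 hq2 hsq]
    · rintro (⟨q, hq1, hq2, hq⟩ | u)
      · exact ⟨⟨q, hq1, hq2, Or.inl hq⟩, by simp [hq]⟩
      · refine ⟨⟨p₀, h₀.1, h₀.2.1, Or.inr h₀.2.2⟩, ?_⟩
        have : ¬ P p₀ := fun h => hdisj _ h h₀.2.2
        simp [this]
  rw [Nat.card_congr e, Nat.card_sum]
  simp

lemma card_iff_congr (P Q : ℤ × ℤ → Prop) (h : ∀ p, P p ↔ Q p) :
    Nat.card {p : ℤ × ℤ // P p} = Nat.card {p : ℤ × ℤ // Q p} :=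
  Nat.card_congr (Equiv.subtypeEquivRight h)

lemma finite_bounded (B : ℤ) (P : ℤ × ℤ → Prop)
    (h : ∀ p, P p → 1 ≤ p.1 ∧ p.1 ≤ (n:ℤ) ∧ 1 ≤ p.2 ∧ p.2 ≤ B) :
    Finite {p : ℤ × ℤ // P p} := by
  have hsub : {p : ℤ × ℤ | P p} ⊆ Set.Icc (1:ℤ) (n:ℤ) ×ˢ Set.Icc (1:ℤ) B := by
    intro p hp
    rcases h p hp with ⟨h1, h2, h3, h4⟩
    exact ⟨⟨h1, h2⟩, ⟨h3, h4⟩⟩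
  have hf : (Set.Icc (1:ℤ) (n:ℤ) ×ˢ Set.Icc (1:ℤ) B).Finite :=
    (Set.finite_Icc _ _).prod (Set.finite_Icc _ _)
  exact (hf.subset hsub).to_subtype

lemma aff_disp_bound (hn : 2 ≤ n) {w : Equiv.Perm ℤ} (hw : IsAffine n w) :
    ∃ M : ℤ, ∀ x : ℤ, w x - x ≤ M ∧ -M ≤ w x - x := by
  have hne : (Finset.Icc (1:ℤ) (n:ℤ)).Nonempty := by
    refine ⟨1, ?_⟩
    simp only [Finset.mem_Icc]
    have := Npos hn
    omega
  have hne2 : ((Finset.Icc (1:ℤ) (n:ℤ)).image (fun r => |w r - r|)).Nonempty :=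
    hne.image _
  refine ⟨((Finset.Icc (1:ℤ) (n:ℤ)).image (fun r => |w r - r|)).max' hne2, ?_⟩
  intro x
  rcases nrm_dvd (n := n) x with ⟨k, hk⟩
  have hx : x = nrm n x + (-k) * n := by linarith
  have hval : w x - x = w (nrm n x) - nrm n x := by
    have h2 : w (nrm n x + (-k) * n) = w (nrm n x) + (-k) * n := aff_shift hw _ _
    rw [← hx] at h2
    rw [h2]; linarith
  have hmem : |w (nrm n x) - nrm n x| ∈ (Finset.Icc (1:ℤ) (n:ℤ)).image (fun r => |w r - r|) := by
    apply Finset.mem_image_of_mem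
    simp only [Finset.mem_Icc]
    exact ⟨nrm_one_le hn _, nrm_le hn _⟩
  have hle := Finset.le_max' _ _ hmem
  rw [hval]
  constructor
  · exact (le_abs_self _).trans hle
  · have := neg_abs_le (w (nrm n x) - nrm n x)
    linarith

lemma affLen_set_finite (hn : 2 ≤ n) {w : Equiv.Perm ℤ} (hw : IsAffine n w) :
    Finite {p : ℤ × ℤ // 1 ≤ p.1 ∧ p.1 ≤ (n:ℤ) ∧ p.1 < p.2 ∧ w p.2 < w p.1} := by
  rcases aff_disp_bound hn hw with ⟨M, hM⟩
  apply finite_bounded ((n:ℤ) + 2 * M)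
  rintro p ⟨h1, h2, h3, h4⟩
  refine ⟨h1, h2, by omega, ?_⟩
  have b1 := (hM p.1).1
  have b2 := (hM p.2).2
  omega

lemma absLen_set_finite (hn : 2 ≤ n) {z : Equiv.Perm ℤ} (hz : IsAffine n z) :
    Finite {p : ℤ × ℤ // 1 ≤ p.1 ∧ p.1 ≤ (n:ℤ) ∧ p.1 < p.2 ∧ z p.1 = p.2} := by
  rcases aff_disp_bound hn hz with ⟨M, hM⟩
  apply finite_bounded ((n:ℤ) + M)
  rintro p ⟨h1, h2, h3, h4⟩
  refine ⟨h1, h2, by omega, ?_⟩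
  have b1 := (hM p.1).1
  rw [h4] at b1
  omega

lemma affLen_one : affLen n 1 = 0 := by
  unfold affLen
  rw [Nat.card_eq_zero]
  left
  refine ⟨fun p => ?_⟩
  rcases p with ⟨p, h1, h2, h3, h4⟩
  simp only [Equiv.Perm.one_apply] at h4
  omega

lemma absLen_one : absLen n 1 = 0 := by
  unfold absLen
  rw [Nat.card_eq_zero]
  left
  refine ⟨fun p => ?_⟩
  rcases p with ⟨p, h1, h2, h3, h4⟩
  simp only [Equiv.Perm.one_apply] at h4
  omega

lemma finite_of_imp {P Q : ℤ × ℤ → Prop} (h : ∀ p, P p → Q p)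
    (hQ : Finite {p : ℤ × ℤ // Q p}) : Finite {p : ℤ × ℤ // P p} :=
  Finite.of_injective (fun p => (⟨p.1, h p.1 p.2⟩ : {p : ℤ × ℤ // Q p}))
    (fun a b hab => by
      apply Subtype.ext
      have := congrArg Subtype.val hab
      simpa using this)

lemma len_inv (hn : 2 ≤ n) {w : Equiv.Perm ℤ} (hw : IsAffine n w) :
    affLen n w⁻¹ = affLen n w := by
  have hwi := aff_inv hn hw
  unfold affLen
  refine (card_bij hn _ _ (fun p => (w⁻¹ p.2, w⁻¹ p.1)) (fun p => (w p.2, w p.1))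
    ?_ ?_ ?_ ?_ ?_ ?_ ?_ ?_).symm.symm
  · rintro p ⟨h1, h2⟩
    simp
  · rintro p ⟨h1, h2⟩
    simp
  · rintro p ⟨h1, h2⟩
    exact ⟨h2, by simpa using h1⟩
  · rintro p ⟨h1, h2⟩
    exact ⟨h2, by simpa using h1⟩
  · intro p m
    rw [Prod.mk.injEq]
    exact ⟨aff_shift hwi _ _, aff_shift hwi _ _⟩
  · intro p m
    rw [Prod.mk.injEq]
    exact ⟨aff_shift hw _ _, aff_shift hw _ _⟩
  · rintro p m ⟨h1, h2⟩
    exact ⟨by omega, by rw [aff_shift hwi, aff_shift hwi]; omega⟩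
  · rintro p m ⟨h1, h2⟩
    exact ⟨by omega, by rw [aff_shift hw, aff_shift hw]; omega⟩

lemma aff_lt_shift {w : Equiv.Perm ℤ} (hw : IsAffine n w) {a b : ℤ} (h : w a < w b) (m : ℤ) :
    w (a + m * n) < w (b + m * n) := by
  rw [aff_shift hw, aff_shift hw]; omega

/-- the ascent lemma: if `w i < w (i+1)` then right-multiplying by `s_i` adds an inversion -/
lemma len_asc (hn : 2 ≤ n) {w : Equiv.Perm ℤ} (hw : IsAffine n w) {i : ℤ}
    (h : w i < w (i + 1)) : affLen n (w * sPerm n i) = affLen n w + 1 := by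
  set u := w * sPerm n i with hu
  have hu_apply : ∀ x, u x = w (sPerm n i x) := fun x => rfl
  have huaff : IsAffine n u := aff_mul hn hw (aff_s hn i)
  have hper : ∀ t : ℤ, ∀ x : ℤ, (n:ℤ) ∣ x - i → w x < w (x + 1) := by
    intro t x hx
    rcases hx with ⟨k, hk⟩
    have hx' : x = i + k * n := by linarith
    have h1 : w (i + k * n) < w (i + 1 + k * n) := aff_lt_shift hw h k
    rw [hx']
    rw [show i + k * n + 1 = i + 1 + k * n by ring]
    exact h1
  -- the special pair predicate
  set sp : ℤ × ℤ → Prop := fun p => (n:ℤ) ∣ p.1 - i ∧ p.2 = p.1 + 1 with hsp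
  set P' : ℤ × ℤ → Prop := fun p => p.1 < p.2 ∧ ¬ sp p ∧ u p.2 < u p.1 with hP'
  have hspinv : ∀ p : ℤ × ℤ, sp p → (p.1 < p.2 ∧ u p.2 < u p.1) := by
    rintro p ⟨hd, he⟩
    refine ⟨by omega, ?_⟩
    have e1 : u p.1 = w (p.1 + 1) := by rw [hu_apply, s_up hd]
    have e2 : u p.2 = w p.1 := by
      rw [hu_apply, he, s_down hn (by rcases hd with ⟨k, hk⟩; exact ⟨k, by linarith⟩)]
      ring_nf
    rw [e1, e2]
    exact hper 0 p.1 hd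
  have step1 : affLen n u =
      Nat.card {p : ℤ × ℤ // 1 ≤ p.1 ∧ p.1 ≤ (n:ℤ) ∧ (P' p ∨ sp p)} := by
    unfold affLen
    apply card_iff_congr
    intro p
    constructor
    · rintro ⟨h1, h2, h3, h4⟩
      refine ⟨h1, h2, ?_⟩
      by_cases hs : sp p
      · exact Or.inr hs
      · exact Or.inl ⟨h3, hs, h4⟩
    · rintro ⟨h1, h2, (⟨h3, _, h4⟩ | hs)⟩
      · exact ⟨h1, h2, h3, h4⟩
      · rcases hspinv p hs with ⟨h3, h4⟩
        exact ⟨h1, h2, h3, h4⟩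
  have hfin : Finite {p : ℤ × ℤ // 1 ≤ p.1 ∧ p.1 ≤ (n:ℤ) ∧ P' p} := by
    apply finite_of_imp (Q := fun p => 1 ≤ p.1 ∧ p.1 ≤ (n:ℤ) ∧ p.1 < p.2 ∧ u p.2 < u p.1)
    · rintro p ⟨h1, h2, h3, _, h4⟩
      exact ⟨h1, h2, h3, h4⟩
    · exact affLen_set_finite hn huaff
  have step2 : Nat.card {p : ℤ × ℤ // 1 ≤ p.1 ∧ p.1 ≤ (n:ℤ) ∧ (P' p ∨ sp p)}
      = Nat.card {p : ℤ × ℤ // 1 ≤ p.1 ∧ p.1 ≤ (n:ℤ) ∧ P' p} + 1 := by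
    apply card_succ _ _ (nrm n i, nrm n i + 1)
    · refine ⟨nrm_one_le hn i, nrm_le hn i, ?_, rfl⟩
      rcases nrm_dvd (n := n) i with ⟨k, hk⟩
      exact ⟨k, hk⟩
    · rintro p hp1 hp2 ⟨hd, he⟩
      have : p.1 = nrm n i := (nrm_eq_of hn hp1 hp2 hd).symm
      rw [Prod.ext_iff]
      exact ⟨this, by rw [he, this]⟩
    · rintro p ⟨_, hns, _⟩ hs
      exact hns hs
    · exact hfin
  have hQnotsp : ∀ p : ℤ × ℤ, p.1 < p.2 → w p.2 < w p.1 → ¬ sp p := by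
    rintro p h3 h4 ⟨hd, he⟩
    have := hper 0 p.1 hd
    rw [← he] at this
    omega
  have step3 : Nat.card {p : ℤ × ℤ // 1 ≤ p.1 ∧ p.1 ≤ (n:ℤ) ∧ P' p}
      = affLen n w := by
    unfold affLen
    apply card_bij hn P' (fun p => p.1 < p.2 ∧ w p.2 < w p.1)
      (fun p => (sPerm n i p.1, sPerm n i p.2)) (fun p => (sPerm n i p.1, sPerm n i p.2))
    · rintro p _
      rw [Prod.mk.injEq]
      exact ⟨s_invol hn i _, s_invol hn i _⟩
    · rintro p _
      rw [Prod.mk.injEq]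
      exact ⟨s_invol hn i _, s_invol hn i _⟩
    · rintro p ⟨h3, hns, h4⟩
      refine ⟨s_lt hn h3 hns, ?_⟩
      rw [← hu_apply, ← hu_apply] at *
      exact h4
    · rintro p ⟨h3, h4⟩
      have hns : ¬ sp p := hQnotsp p h3 h4
      refine ⟨s_lt hn h3 hns, ?_, ?_⟩
      · rintro ⟨hd, he⟩
        dsimp only at hd he
        -- σ p.1 ≡ i, σ p.2 = σ p.1 + 1 leads to contradiction
        have e4 : sPerm n i (sPerm n i p.1 + 1) = sPerm n i p.1 := by
          have hdd : (n:ℤ) ∣ (sPerm n i p.1 + 1) - (i + 1) := by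
            rcases hd with ⟨k, hk⟩
            exact ⟨k, by linarith⟩
          rw [s_down hn hdd]
          ring
        have hp1 : p.1 = sPerm n i p.1 + 1 := by
          conv_lhs => rw [← s_invol hn i p.1]
          rw [s_up hd]
        have hp2 : p.2 = sPerm n i p.1 := by
          have h5 := s_invol hn i p.2
          rw [he] at h5
          rw [← h5, e4]
        omega
      · rw [hu_apply, hu_apply, s_invol hn i, s_invol hn i]
        exact h4
    · intro p m
      rw [Prod.mk.injEq]
      exact ⟨s_shift hn i _ m, s_shift hn i _ m⟩
    · intro p m
      rw [Prod.mk.injEq]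
      exact ⟨s_shift hn i _ m, s_shift hn i _ m⟩
    · rintro p m ⟨h3, hns, h4⟩
      refine ⟨by omega, ?_, ?_⟩
      · rintro ⟨hd, he⟩
        apply hns
        refine ⟨dvd_shift.mp hd, by omega⟩
      · exact aff_lt_shift huaff h4 m
    · rintro p m ⟨h3, h4⟩
      exact ⟨by omega, aff_lt_shift hw h4 m⟩
  omega

lemma len_desc (hn : 2 ≤ n) {w : Equiv.Perm ℤ} (hw : IsAffine n w) {i : ℤ}
    (h : w (i + 1) < w i) : affLen n w = affLen n (w * sPerm n i) + 1 := by
  set u := w * sPerm n i with hu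
  have huaff : IsAffine n u := aff_mul hn hw (aff_s hn i)
  have h1 : u i = w (i + 1) := by
    show w (sPerm n i i) = w (i+1)
    rw [s_up ⟨0, by ring⟩]
  have h2 : u (i + 1) = w i := by
    show w (sPerm n i (i+1)) = w i
    rw [s_down hn ⟨0, by ring⟩]
    ring_nf
  have key := len_asc hn huaff (i := i) (by rw [h1, h2]; exact h)
  have : u * sPerm n i = w := by
    rw [hu, mul_assoc, s_mul_self hn, mul_one]
  rw [this] at key
  omega

lemma len_neq (hn : 2 ≤ n) {w : Equiv.Perm ℤ} (i : ℤ) : w i ≠ w (i + 1) := by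
  intro hc
  have := w.injective hc
  omega

lemma len_dichot (hn : 2 ≤ n) {w : Equiv.Perm ℤ} (hw : IsAffine n w) (i : ℤ) :
    affLen n (w * sPerm n i) = affLen n w + 1 ∨
      affLen n w = affLen n (w * sPerm n i) + 1 := by
  rcases lt_trichotomy (w i) (w (i+1)) with h | h | h
  · exact Or.inl (len_asc hn hw h)
  · exact absurd h (len_neq hn i)
  · exact Or.inr (len_desc hn hw h)

lemma len_asc_iff (hn : 2 ≤ n) {w : Equiv.Perm ℤ} (hw : IsAffine n w) (i : ℤ) :
    affLen n (w * sPerm n i) = affLen n w + 1 ↔ w i < w (i + 1) := by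
  constructor
  · intro hl
    rcases lt_trichotomy (w i) (w (i+1)) with h | h | h
    · exact h
    · exact absurd h (len_neq hn i)
    · have := len_desc hn hw h
      omega
  · exact len_asc hn hw

/-- strictly monotone affine permutation is the identity -/
lemma mono_eq_one (hn : 2 ≤ n) {w : Equiv.Perm ℤ} (hw : IsAffine n w)
    (hm : ∀ x : ℤ, w x < w (x + 1)) : w = 1 := by
  have hstep : ∀ a : ℤ, ∀ m : ℕ, w a + m ≤ w (a + m) := by
    intro a m
    induction m with
    | zero => simp
    | succ k ih =>
        have := hm (a + k)
        push_cast
        push_cast at ih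
        have e : a + ((k:ℤ) + 1) = (a + k) + 1 := by ring
        rw [e]
        omega
  have hconst : ∀ x : ℤ, 1 ≤ x → x ≤ (n:ℤ) → w x = w 1 + (x - 1) := by
    intro x h1 h2
    have hk : ∃ m : ℕ, x = 1 + (m:ℤ) ∧ (m:ℤ) ≤ (n:ℤ) - 1 := by
      refine ⟨(x - 1).toNat, ?_, ?_⟩ <;> omega
    rcases hk with ⟨m, hm1, hm2⟩
    have low : w 1 + (m:ℤ) ≤ w (1 + m) := hstep 1 m
    have hrest : ∃ r : ℕ, (r:ℤ) = (n:ℤ) - m := ⟨((n:ℤ) - m).toNat, by omega⟩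
    rcases hrest with ⟨r, hr⟩
    have high : w (1 + (m:ℤ)) + (r:ℤ) ≤ w ((1 + (m:ℤ)) + r) := hstep (1 + m) r
    have e : (1 + (m:ℤ)) + (r:ℤ) = 1 + (n:ℤ) := by omega
    rw [e] at high
    have hper : w (1 + (n:ℤ)) = w 1 + n := hw.1 1
    rw [hper] at high
    rw [hm1]
    omega
  have hdisp : ∀ x : ℤ, w x = x + (w 1 - 1) := by
    intro x
    rcases nrm_dvd (n := n) x with ⟨k, hk⟩
    have hx : x = nrm n x + (-k) * n := by linarith
    have h2 : w (nrm n x + (-k) * n) = w (nrm n x) + (-k) * n := aff_shift hw _ _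
    rw [← hx] at h2
    rw [h2, hconst (nrm n x) (nrm_one_le hn x) (nrm_le hn x)]
    linarith
  have hc : (n:ℤ) * (w 1 - 1) = 0 := by
    have := hw.2
    rw [Finset.sum_congr rfl (fun x _ => by rw [hdisp x]; ring_nf : ∀ x ∈ Finset.Icc (1:ℤ) (n:ℤ), w x - x = w 1 - 1)] at this
    rw [Finset.sum_const, Int.card_Icc] at this
    have hcard : ((n:ℤ) + 1 - 1).toNat = n := by omega
    rw [hcard] at this
    simpa [nsmul_eq_mul] using this
  have : w 1 = 1 := by
    have hN := Npos hn
    rcases mul_eq_zero.mp hc with h | h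
    · omega
    · omega
  apply Equiv.ext
  intro x
  rw [Equiv.Perm.one_apply, hdisp x, this]
  ring

lemma exists_descent (hn : 2 ≤ n) {w : Equiv.Perm ℤ} (hw : IsAffine n w) (hne : w ≠ 1) :
    ∃ i : ℤ, w (i + 1) < w i := by
  by_contra hc
  push_neg at hc
  apply hne
  apply mono_eq_one hn hw
  intro x
  rcases lt_trichotomy (w x) (w (x+1)) with h | h | h
  · exact h
  · exact absurd h (len_neq hn x)
  · exact absurd h (not_lt.mpr (hc x))

lemma len_zero_eq_one (hn : 2 ≤ n) {w : Equiv.Perm ℤ} (hw : IsAffine n w)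
    (h : affLen n w = 0) : w = 1 := by
  by_contra hne
  rcases exists_descent hn hw hne with ⟨i, hi⟩
  have := len_desc hn hw hi
  omega

lemma len_lasc_iff (hn : 2 ≤ n) {w : Equiv.Perm ℤ} (hw : IsAffine n w) (i : ℤ) :
    affLen n (sPerm n i * w) = affLen n w + 1 ↔ w⁻¹ i < w⁻¹ (i + 1) := by
  have hinv : (sPerm n i * w)⁻¹ = w⁻¹ * sPerm n i := by
    rw [mul_inv_rev, s_inv hn]
  have e1 : affLen n (sPerm n i * w) = affLen n (w⁻¹ * sPerm n i) := by
    rw [← hinv]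
    exact (len_inv hn (aff_mul hn (aff_s hn i) hw)).symm
  have e2 : affLen n w = affLen n w⁻¹ := (len_inv hn hw).symm
  rw [e1, e2]
  exact len_asc_iff hn (aff_inv hn hw) i

lemma len_ldichot (hn : 2 ≤ n) {w : Equiv.Perm ℤ} (hw : IsAffine n w) (i : ℤ) :
    affLen n (sPerm n i * w) = affLen n w + 1 ∨
      affLen n w = affLen n (sPerm n i * w) + 1 := by
  have hinv : (sPerm n i * w)⁻¹ = w⁻¹ * sPerm n i := by
    rw [mul_inv_rev, s_inv hn]
  have e1 : affLen n (sPerm n i * w) = affLen n (w⁻¹ * sPerm n i) := by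
    rw [← hinv]
    exact (len_inv hn (aff_mul hn (aff_s hn i) hw)).symm
  have e2 : affLen n w = affLen n w⁻¹ := (len_inv hn hw).symm
  rw [e1, e2]
  exact len_dichot hn (aff_inv hn hw) i

/-- the lifting (exchange) property, proved concretely -/
lemma lifting (hn : 2 ≤ n) {v : Equiv.Perm ℤ} (hv : IsAffine n v) {i j : ℤ}
    (h1 : affLen n (sPerm n i * v) = affLen n v + 1)
    (h2 : affLen n (v * sPerm n j) = affLen n v + 1)
    (h3 : affLen n (sPerm n i * (v * sPerm n j)) < affLen n (v * sPerm n j)) :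
    sPerm n i * v = v * sPerm n j := by
  have hu : IsAffine n (v * sPerm n j) := aff_mul hn hv (aff_s hn j)
  set a := v⁻¹ i with ha
  set b := v⁻¹ (i+1) with hb
  have hab : a < b := (len_lasc_iff hn hv i).mp h1
  have hu3 : ¬ ((v * sPerm n j)⁻¹ i < (v * sPerm n j)⁻¹ (i+1)) := by
    intro hc
    have := (len_lasc_iff hn hu i).mpr hc
    omega
  have huinv : ∀ x : ℤ, (v * sPerm n j)⁻¹ x = sPerm n j (v⁻¹ x) := by
    intro x
    rw [mul_inv_rev, s_inv hn]
    rfl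
  rw [huinv, huinv] at hu3
  rcases s_cases hn (i := j) hab with hlt | ⟨hd, he, _, _⟩
  · exact absurd hlt hu3
  -- now a = v⁻¹ i ≡ j, b = a + 1
  have hva : v a = i := perm_apply_inv_self v i
  have hvb : v (a + 1) = i + 1 := by rw [← he, hb]; exact perm_apply_inv_self v _
  rcases hd with ⟨k', hk'⟩
  apply Equiv.ext
  intro x
  show sPerm n i (v x) = v (sPerm n j x)
  by_cases hx1 : (n:ℤ) ∣ x - j
  · rcases hx1 with ⟨k, hk⟩
    have hx : x = a + (k - k') * n := by linarith
    have hvx : v x = i + (k - k') * n := by rw [hx, aff_shift hv, hva]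
    have hsj : sPerm n j x = x + 1 := s_up ⟨k, hk⟩
    have hgoal1 : sPerm n i (v x) = v x + 1 := s_up (by rw [hvx]; exact ⟨k - k', by ring⟩)
    have hgoal2 : v (sPerm n j x) = v x + 1 := by
      rw [hsj, hvx, show x + 1 = (a + 1) + (k - k') * (n:ℤ) from by rw [hx]; ring,
        aff_shift hv, hvb]
      ring
    rw [hgoal1, hgoal2]
  · by_cases hx2 : (n:ℤ) ∣ x - (j + 1)
    · rcases hx2 with ⟨k, hk⟩
      have hx : x = (a + 1) + (k - k') * n := by linarith
      have hvx : v x = (i + 1) + (k - k') * n := by rw [hx, aff_shift hv, hvb]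
      have hsj : sPerm n j x = x - 1 := s_down hn ⟨k, hk⟩
      have hgoal1 : sPerm n i (v x) = v x - 1 :=
        s_down hn (by rw [hvx]; exact ⟨k - k', by ring⟩)
      have hgoal2 : v (sPerm n j x) = v x - 1 := by
        rw [hsj, hvx, show x - 1 = a + (k - k') * (n:ℤ) from by rw [hx]; ring,
          aff_shift hv, hva]
        ring
      rw [hgoal1, hgoal2]
    · have hsj : sPerm n j x = x := s_fix hx1 hx2
      rw [hsj]
      apply s_fix
      · rintro ⟨k, hk⟩
        apply hx1
        have hvax : v (a + k * n) = v x := by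
          rw [aff_shift hv, hva]; linarith
        have hxa : x = a + k * n := v.injective hvax.symm
        exact ⟨k + k', by rw [hxa]; linarith⟩
      · rintro ⟨k, hk⟩
        apply hx2
        have hvax : v ((a + 1) + k * n) = v x := by
          rw [aff_shift hv, hvb]; linarith
        have hxa : x = (a + 1) + k * n := v.injective hvax.symm
        exact ⟨k + k', by rw [hxa]; linarith⟩

lemma invol_near (hn : 2 ≤ n) {z : Equiv.Perm ℤ} (hz : IsAffine n z)
    (hz2 : ∀ x, z (z x) = x) {x m : ℤ} (h : z x = x + m * n) : m = 0 := by
  have h1 : z (z x) = x := hz2 x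
  rw [h, aff_shift hz, h] at h1
  have hN := Npos hn
  rcases mul_eq_zero.mp (show m * (n:ℤ) = 0 by linarith) with h | h
  · exact h
  · omega

lemma invol_mul_self {z : Equiv.Perm ℤ} (hz2 : ∀ x, z (z x) = x) : z * z = 1 :=
  Equiv.ext fun x => hz2 x

lemma invol_inv {z : Equiv.Perm ℤ} (hz2 : ∀ x, z (z x) = x) : z⁻¹ = z :=
  inv_eq_of_mul_eq_one_right (invol_mul_self hz2)

lemma commute_fix (hn : 2 ≤ n) {z : Equiv.Perm ℤ} (hz : IsAffine n z)
    (hz2 : ∀ x, z (z x) = x) {i : ℤ}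
    (hcomm : sPerm n i * z = z * sPerm n i) (hasc : z i < z (i + 1)) :
    z i = i ∧ z (i + 1) = i + 1 := by
  have hc : ∀ x : ℤ, sPerm n i (z x) = z (sPerm n i x) := by
    intro x
    have := congrArg (fun e : Equiv.Perm ℤ => e x) hcomm
    simpa using this
  have hci : sPerm n i (z i) = z (i + 1) := by
    rw [hc i, s_up ⟨0, by ring⟩]
  by_cases h1 : (n:ℤ) ∣ z i - i
  · rcases h1 with ⟨k, hk⟩
    have hk0 : k = 0 := by
      have := invol_near hn hz hz2 (x := i) (m := k) (by linarith)
      omega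
    have hzi : z i = i := by
      rw [hk0] at hk
      simp at hk
      omega
    refine ⟨hzi, ?_⟩
    rw [← hci, hzi, s_up ⟨0, by ring⟩]
  · by_cases h2 : (n:ℤ) ∣ z i - (i + 1)
    · exfalso
      rcases h2 with ⟨k, hk⟩
      have hzi : z i = i + 1 + k * n := by linarith
      have e1 : z (i + 1) = sPerm n i (z i) := hci.symm
      have e2 : sPerm n i (z i) = z i - 1 := s_down hn ⟨k, by linarith⟩
      -- also invol: z (z i) = i
      have e3 : z (i + 1 + k * n) = i := by rw [← hzi, hz2]
      have e4 : z (i + 1) = i - k * n := by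
        have h9 := aff_shift hz (i + 1) k
        linarith
      rw [e2, hzi] at e1
      have hkn : k * (n:ℤ) = 0 := by linarith
      rw [hzi, e4] at hasc
      linarith
    · exfalso
      have : sPerm n i (z i) = z i := s_fix h1 h2
      rw [hci] at this
      have := z.injective this
      omega

lemma abs_commute (hn : 2 ≤ n) {z : Equiv.Perm ℤ} (hz : IsAffine n z)
    (hz2 : ∀ x, z (z x) = x) {i : ℤ} (hfix1 : z i = i) (hfix2 : z (i + 1) = i + 1) :
    absLen n (z * sPerm n i) = absLen n z + 1 := by
  set z2 := z * sPerm n i with hz2def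
  have hz2aff : IsAffine n z2 := aff_mul hn hz (aff_s hn i)
  have hz2ap : ∀ x, z2 x = z (sPerm n i x) := fun x => rfl
  have hzfix : ∀ x : ℤ, (n:ℤ) ∣ x - i → z x = x := by
    rintro x ⟨k, hk⟩
    have hx : x = i + k * n := by linarith
    rw [hx, aff_shift hz, hfix1]
  have hzfix2 : ∀ x : ℤ, (n:ℤ) ∣ x - (i+1) → z x = x := by
    rintro x ⟨k, hk⟩
    have hx : x = (i + 1) + k * n := by linarith
    rw [hx, aff_shift hz, hfix2]
  set sp : ℤ × ℤ → Prop := fun p => (n:ℤ) ∣ p.1 - i ∧ p.2 = p.1 + 1 with hsp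
  set P : ℤ × ℤ → Prop := fun p => p.1 < p.2 ∧ z p.1 = p.2 with hP
  have hspval : ∀ x : ℤ, (n:ℤ) ∣ x - i → z2 x = x + 1 := by
    intro x hx
    rw [hz2ap, s_up hx, hzfix2 (x+1) (by rcases hx with ⟨k,hk⟩; exact ⟨k, by linarith⟩)]
  have key : ∀ p : ℤ × ℤ, (p.1 < p.2 ∧ z2 p.1 = p.2) ↔ (P p ∨ sp p) := by
    intro p
    constructor
    · rintro ⟨h3, h4⟩
      by_cases hx1 : (n:ℤ) ∣ p.1 - i
      · right
        exact ⟨hx1, by rw [← h4, hspval p.1 hx1]⟩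
      · by_cases hx2 : (n:ℤ) ∣ p.1 - (i+1)
        · exfalso
          rw [hz2ap, s_down hn hx2,
            hzfix (p.1 - 1) (by rcases hx2 with ⟨k,hk⟩; exact ⟨k, by linarith⟩)] at h4
          omega
        · left
          rw [hz2ap, s_fix hx1 hx2] at h4
          exact ⟨h3, h4⟩
    · rintro (⟨h3, h4⟩ | ⟨hd, he⟩)
      · refine ⟨h3, ?_⟩
        have hx1 : ¬ (n:ℤ) ∣ p.1 - i := by
          intro hc
          rw [hzfix p.1 hc] at h4
          omega
        have hx2 : ¬ (n:ℤ) ∣ p.1 - (i+1) := by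
          intro hc
          rw [hzfix2 p.1 hc] at h4
          omega
        rw [hz2ap, s_fix hx1 hx2]
        exact h4
      · exact ⟨by omega, by rw [hspval p.1 hd, he]⟩
  unfold absLen
  rw [card_iff_congr
    (fun p => 1 ≤ p.1 ∧ p.1 ≤ (n:ℤ) ∧ p.1 < p.2 ∧ z2 p.1 = p.2)
    (fun p => 1 ≤ p.1 ∧ p.1 ≤ (n:ℤ) ∧ (P p ∨ sp p))
    (fun p => by
      constructor
      · rintro ⟨h1, h2, h3⟩
        exact ⟨h1, h2, (key p).mp h3⟩
      · rintro ⟨h1, h2, h3⟩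
        rcases (key p).mpr h3 with ⟨h4, h5⟩
        exact ⟨h1, h2, h4, h5⟩)]
  have hfin : Finite {p : ℤ × ℤ // 1 ≤ p.1 ∧ p.1 ≤ (n:ℤ) ∧ P p} :=
    absLen_set_finite hn hz
  rw [card_succ P sp (nrm n i, nrm n i + 1)
    ⟨nrm_one_le hn i, nrm_le hn i, nrm_dvd i, rfl⟩
    (by
      rintro p hp1 hp2 ⟨hd, he⟩
      have h5 : p.1 = nrm n i := (nrm_eq_of hn hp1 hp2 hd).symm
      rw [Prod.ext_iff]
      exact ⟨h5, by rw [he, h5]⟩)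
    (by
      rintro p ⟨h3, h4⟩ ⟨hd, he⟩
      rw [hzfix p.1 hd] at h4
      omega)
    hfin]

lemma abs_conj (hn : 2 ≤ n) {z : Equiv.Perm ℤ} (hz : IsAffine n z)
    (hz2 : ∀ x, z (z x) = x) {i : ℤ} (hasc : z i < z (i + 1)) :
    absLen n (sPerm n i * z * sPerm n i) = absLen n z := by
  set z2 := sPerm n i * z * sPerm n i with hz2def
  have hsaff := aff_s hn i
  have hz2aff : IsAffine n z2 := aff_mul hn (aff_mul hn hsaff hz) hsaff
  have hz2ap : ∀ x, z2 x = sPerm n i (z (sPerm n i x)) := fun x => rfl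
  have hni : ∀ a : ℤ, (n:ℤ) ∣ a - i → z a ≠ a + 1 := by
    rintro a ⟨k, hk⟩ hc
    have hA : a = i + k * n := by linarith
    rw [hA, aff_shift hz] at hc
    have hzi : z i = i + 1 := by linarith
    have h9 := hz2 i
    rw [hzi] at h9
    omega
  have hni2 : ∀ a : ℤ, (n:ℤ) ∣ a - i → z2 a ≠ a + 1 := by
    rintro a ⟨k, hk⟩ hc
    have hA : a = i + k * n := by linarith
    rw [hA] at hc
    rw [hz2ap, s_up (n := n) (i := i) (x := i + k * (n:ℤ)) ⟨k, by ring⟩] at hc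
    rw [show i + k * (n:ℤ) + 1 = (i+1) + k * n by ring, aff_shift hz] at hc
    have h10 : sPerm n i (z (i+1)) + k * (n:ℤ) = (i + 1) + k * n := by
      rw [← s_shift hn]; exact hc
    have h6 : sPerm n i (z (i + 1)) = i + 1 := by linarith
    have h7 : z (i + 1) = sPerm n i (i + 1) := by
      rw [← s_invol hn i (z (i+1)), h6]
    rw [s_down hn ⟨0, by ring⟩] at h7
    have h8 : z (i + 1) = i := by omega
    have h9 := hz2 (i + 1)
    rw [h8] at h9
    omega
  symm
  unfold absLen
  apply card_bij hn (fun p => p.1 < p.2 ∧ z p.1 = p.2) (fun p => p.1 < p.2 ∧ z2 p.1 = p.2)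
    (fun p => (sPerm n i p.1, sPerm n i p.2)) (fun p => (sPerm n i p.1, sPerm n i p.2))
  · rintro p _
    rw [Prod.mk.injEq]
    exact ⟨s_invol hn i _, s_invol hn i _⟩
  · rintro p _
    rw [Prod.mk.injEq]
    exact ⟨s_invol hn i _, s_invol hn i _⟩
  · rintro p ⟨h3, h4⟩
    have hord : sPerm n i p.1 < sPerm n i p.2 := by
      rcases s_cases hn (i := i) h3 with hlt | ⟨hd, he, _, _⟩
      · exact hlt
      · exact absurd (by rw [h4, he]) (hni p.1 hd)
    refine ⟨hord, ?_⟩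
    show sPerm n i (z (sPerm n i (sPerm n i p.1))) = sPerm n i p.2
    rw [s_invol hn i, h4]
  · rintro p ⟨h3, h4⟩
    have hord : sPerm n i p.1 < sPerm n i p.2 := by
      rcases s_cases hn (i := i) h3 with hlt | ⟨hd, he, _, _⟩
      · exact hlt
      · exact absurd (by rw [h4, he]) (hni2 p.1 hd)
    refine ⟨hord, ?_⟩
    have h5 : sPerm n i (z (sPerm n i p.1)) = p.2 := h4
    have h6 := congrArg (sPerm n i) h5
    rw [s_invol hn i] at h6
    exact h6
  · intro p m
    rw [Prod.mk.injEq]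
    exact ⟨s_shift hn i _ m, s_shift hn i _ m⟩
  · intro p m
    rw [Prod.mk.injEq]
    exact ⟨s_shift hn i _ m, s_shift hn i _ m⟩
  · rintro p m ⟨h3, h4⟩
    exact ⟨by omega, by rw [aff_shift hz, h4]⟩
  · rintro p m ⟨h3, h4⟩
    exact ⟨by omega, by rw [aff_shift hz2aff, h4]⟩

end AtomAux

namespace AtomAux
variable {n : ℕ}

lemma invol_len_s (hn : 2 ≤ n) {z : Equiv.Perm ℤ} (hzaff : IsAffine n z)
    (hzinv : ∀ x, z (z x) = x) (j : ℤ) :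
    affLen n (sPerm n j * z) = affLen n (z * sPerm n j) := by
  have h1 : (sPerm n j * z)⁻¹ = z * sPerm n j := by
    rw [mul_inv_rev, s_inv hn, invol_inv hzinv]
  rw [← h1, len_inv hn (aff_mul hn (aff_s hn j) hzaff)]

lemma D_left (hn : 2 ≤ n) {D : Equiv.Perm ℤ → Equiv.Perm ℤ → Equiv.Perm ℤ}
    (hD : IsDemazure n D) :
    ∀ k : ℕ, ∀ w : Equiv.Perm ℤ, IsAffine n w → affLen n w = k → ∀ i : ℤ,
      (affLen n (sPerm n i * w) = affLen n w + 1 → D (sPerm n i) w = sPerm n i * w) ∧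
      (affLen n w = affLen n (sPerm n i * w) + 1 → D (sPerm n i) w = w) := by
  obtain ⟨hassoc, hclose, hunit, hgen⟩ := hD
  intro k
  induction k using Nat.strong_induction_on with
  | _ k IH =>
    intro w hw hk i
    by_cases hone : w = 1
    · subst hone
      constructor
      · intro _
        rw [(hunit (sPerm n i) (aff_s hn i)).1, mul_one]
      · intro hlen
        rw [affLen_one] at hlen
        omega
    · obtain ⟨j, hj⟩ := exists_descent hn hw hone
      set v := w * sPerm n j with hv
      have hvaff : IsAffine n v := aff_mul hn hw (aff_s hn j)
      have hlv : affLen n w = affLen n v + 1 := len_desc hn hw hj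
      have hvw : v * sPerm n j = w := by
        rw [hv, mul_assoc, s_mul_self hn, mul_one]
      have hDvs : D v (sPerm n j) = w := by
        rw [(hgen v hvaff j).2 (by rw [hvw]; omega), hvw]
      have hsw : D (sPerm n i) w = D (D (sPerm n i) v) (sPerm n j) := by
        rw [hassoc _ _ _ (aff_s hn i) hvaff (aff_s hn j), hDvs]
      have hIH := IH (affLen n v) (by omega) v hvaff rfl i
      have hsvaff : IsAffine n (sPerm n i * v) := aff_mul hn (aff_s hn i) hvaff
      rcases len_ldichot hn hvaff i with hA | hB
      · -- ℓ(s v) = ℓ v + 1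
        have hDsv : D (sPerm n i) v = sPerm n i * v := hIH.1 hA
        rcases len_dichot hn hsvaff j with hA1 | hA2
        · -- ℓ((s v) s_j) = ℓ(s v) + 1
          have hfin : D (sPerm n i) w = sPerm n i * w := by
            rw [hsw, hDsv, (hgen _ hsvaff j).2 (by omega), mul_assoc, hvw]
          have hlsw : affLen n (sPerm n i * w) = affLen n v + 2 := by
            rw [← hvw, ← mul_assoc]
            omega
          constructor
          · intro _; exact hfin
          · intro h2; omega
        · -- ℓ(s v) = ℓ((s v) s_j) + 1 : use lifting
          have heq : sPerm n i * v = v * sPerm n j := by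
            apply lifting hn hvaff hA (by rw [hvw]; omega)
            rw [← mul_assoc]
            have : affLen n (v * sPerm n j) = affLen n w := by rw [hvw]
            omega
          have heq2 : sPerm n i * v = w := heq.trans hvw
          have hws : w * sPerm n j = v := by
            rw [← hvw, mul_assoc, s_mul_self hn, mul_one]
          have hfin : D (sPerm n i) w = w := by
            rw [hsw, hDsv, heq2, (hgen w hw j).1 (by rw [hws]; omega)]
          have hswv : sPerm n i * w = v := by
            rw [← heq2, ← mul_assoc, s_mul_self hn, one_mul]
          constructor
          · intro h2
            rw [hswv] at h2
            omega
          · intro _; exact hfin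
      · -- ℓ v = ℓ(s v) + 1
        have hDsv : D (sPerm n i) v = v := hIH.2 hB
        have hfin : D (sPerm n i) w = w := by
          rw [hsw, hDsv, hDvs]
        have he : sPerm n i * w = (sPerm n i * v) * sPerm n j := by
          rw [mul_assoc, hvw]
        constructor
        · intro h2
          rw [he] at h2
          rcases len_dichot hn hsvaff j with h | h <;> omega
        · intro _; exact hfin

lemma dem_step (hn : 2 ≤ n) {D : Equiv.Perm ℤ → Equiv.Perm ℤ → Equiv.Perm ℤ}
    (hD : IsDemazure n D) {v : Equiv.Perm ℤ} (hv : IsAffine n v) {j : ℤ}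
    (hup : affLen n (v * sPerm n j) = affLen n v + 1) :
    D (v * sPerm n j)⁻¹ (v * sPerm n j) = D (sPerm n j) (D (D v⁻¹ v) (sPerm n j)) := by
  obtain ⟨hassoc, hclose, hunit, hgen⟩ := hD
  have hvi : IsAffine n v⁻¹ := aff_inv hn hv
  have hvs : IsAffine n (v * sPerm n j) := aff_mul hn hv (aff_s hn j)
  have hinv : (v * sPerm n j)⁻¹ = sPerm n j * v⁻¹ := by
    rw [mul_inv_rev, s_inv hn]
  have hNsv : affLen n (sPerm n j * v⁻¹) = affLen n v⁻¹ + 1 := by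
    have h1 : (sPerm n j * v⁻¹)⁻¹ = v * sPerm n j := by
      rw [mul_inv_rev, s_inv hn, inv_inv]
    have h2 : affLen n (sPerm n j * v⁻¹) = affLen n (v * sPerm n j) := by
      rw [← h1, len_inv hn (aff_mul hn (aff_s hn j) hvi)]
    rw [h2, len_inv hn hv]
    exact hup
  have hDsvi : D (sPerm n j) v⁻¹ = sPerm n j * v⁻¹ :=
    (D_left hn ⟨hassoc, hclose, hunit, hgen⟩ (affLen n v⁻¹) v⁻¹ hvi rfl j).1 hNsv
  have hDvs : D v (sPerm n j) = v * sPerm n j :=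
    (hgen v hv j).2 (by omega)
  rw [hinv, ← hDsvi, ← hDvs,
    hassoc _ _ _ (aff_s hn j) hvi (hclose _ _ hv (aff_s hn j)),
    hassoc _ _ _ hvi hv (aff_s hn j)]

lemma descent_transfer (hn : 2 ≤ n) {D : Equiv.Perm ℤ → Equiv.Perm ℤ → Equiv.Perm ℤ}
    (hD : IsDemazure n D) {v : Equiv.Perm ℤ} (hv : IsAffine n v) {j : ℤ}
    (hd : affLen n (v * sPerm n j) + 1 = affLen n v) :
    affLen n ((D v⁻¹ v) * sPerm n j) + 1 = affLen n (D v⁻¹ v) := by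
  obtain ⟨hassoc, hclose, hunit, hgen⟩ := hD
  set u := v * sPerm n j with hu
  have huaff : IsAffine n u := aff_mul hn hv (aff_s hn j)
  have huv : u * sPerm n j = v := by
    rw [hu, mul_assoc, s_mul_self hn, mul_one]
  have hupl : affLen n (u * sPerm n j) = affLen n u + 1 := by
    rw [huv]; omega
  have hstep := dem_step hn ⟨hassoc, hclose, hunit, hgen⟩ huaff hupl
  rw [huv] at hstep
  set y := D u⁻¹ u with hy
  have hyaff : IsAffine n y := hclose _ _ (aff_inv hn huaff) huaff
  set b := D y (sPerm n j) with hb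
  have hbaff : IsAffine n b := hclose _ _ hyaff (aff_s hn j)
  have hbdesc : affLen n (b * sPerm n j) + 1 = affLen n b := by
    rcases len_dichot hn hyaff j with h | h
    · have hbe : b = y * sPerm n j := (hgen y hyaff j).2 (by omega)
      have : b * sPerm n j = y := by
        rw [hbe, mul_assoc, s_mul_self hn, mul_one]
      rw [this, hbe]
      omega
    · have hbe : b = y := (hgen y hyaff j).1 (by omega)
      rw [hbe]
      omega
  have hz'aff : IsAffine n (D v⁻¹ v) := hclose _ _ (aff_inv hn hv) hv
  have hlt : affLen n ((D v⁻¹ v) * sPerm n j) < affLen n (D v⁻¹ v) := by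
    rcases len_ldichot hn hbaff j with h | h
    · have hze : D v⁻¹ v = sPerm n j * b := by
        rw [hstep, (D_left hn ⟨hassoc, hclose, hunit, hgen⟩ (affLen n b) b hbaff rfl j).1 h]
      have he2 : (sPerm n j * b) * sPerm n j = sPerm n j * (b * sPerm n j) := by
        rw [mul_assoc]
      rw [hze, he2]
      rcases len_ldichot hn (aff_mul hn hbaff (aff_s hn j)) j with h2 | h2 <;> omega
    · have hze : D v⁻¹ v = b := by
        rw [hstep, (D_left hn ⟨hassoc, hclose, hunit, hgen⟩ (affLen n b) b hbaff rfl j).2 h]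
      rw [hze]
      omega
  rcases len_dichot hn hz'aff j with h | h
  · omega
  · omega

lemma perm_eq_pointwise {z1 z2 : Equiv.Perm ℤ} (h : z1 = z2) (x : ℤ) : z1 x = z2 x := by
  rw [h]

lemma main_ind (hn : 2 ≤ n) {D : Equiv.Perm ℤ → Equiv.Perm ℤ → Equiv.Perm ℤ}
    (hD : IsDemazure n D) :
    ∀ k : ℕ, ∀ w : Equiv.Perm ℤ, IsAffine n w → affLen n w = k →
      IsAffine n (D w⁻¹ w) ∧ (∀ x : ℤ, (D w⁻¹ w) ((D w⁻¹ w) x) = x) ∧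
      affLen n (D w⁻¹ w) + absLen n (D w⁻¹ w) ≤ 2 * k ∧
      ∃ v : Equiv.Perm ℤ, IsAffine n v ∧ D v⁻¹ v = D w⁻¹ w ∧
        2 * affLen n v = affLen n (D w⁻¹ w) + absLen n (D w⁻¹ w) := by
  obtain ⟨hassoc, hclose, hunit, hgen⟩ := hD
  intro k
  induction k using Nat.strong_induction_on with
  | _ k IH =>
    intro w hw hk
    by_cases hone : w = 1
    · subst hone
      have h1 : D (1 : Equiv.Perm ℤ)⁻¹ 1 = 1 := by
        rw [inv_one]
        exact (hunit 1 aff_one).1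
      rw [h1]
      refine ⟨aff_one, fun x => by simp, ?_, 1, aff_one, h1, ?_⟩
      · rw [affLen_one, absLen_one]; omega
      · rw [affLen_one, absLen_one]
    · obtain ⟨j, hj⟩ := exists_descent hn hw hone
      set v := w * sPerm n j with hv
      have hvaff : IsAffine n v := aff_mul hn hw (aff_s hn j)
      have hlv : affLen n w = affLen n v + 1 := len_desc hn hw hj
      have hvw : v * sPerm n j = w := by
        rw [hv, mul_assoc, s_mul_self hn, mul_one]
      obtain ⟨hz'aff, hz'inv, hz'bd, v₀, hv₀aff, hv₀eq, hv₀len⟩ :=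
        IH (affLen n v) (by omega) v hvaff rfl
      set z' := D v⁻¹ v with hz'
      have hstep : D w⁻¹ w = D (sPerm n j) (D z' (sPerm n j)) := by
        have := dem_step hn ⟨hassoc, hclose, hunit, hgen⟩ hvaff (j := j) (by rw [hvw]; omega)
        rw [hvw] at this
        exact this
      rcases len_dichot hn hz'aff j with hup | hdn
      · -- ascent of z' at j
        have hDz's : D z' (sPerm n j) = z' * sPerm n j := (hgen z' hz'aff j).2 (by omega)
        have hz'asc : z' j < z' (j + 1) := (len_asc_iff hn hz'aff j).mp hup
        have hzsaff : IsAffine n (z' * sPerm n j) := aff_mul hn hz'aff (aff_s hn j)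
        -- common: v₁ := v₀ * s_j has bigger length
        have hv₀up : affLen n (v₀ * sPerm n j) = affLen n v₀ + 1 := by
          rcases len_dichot hn hv₀aff j with h | h
          · exact h
          · exfalso
            have := descent_transfer hn ⟨hassoc, hclose, hunit, hgen⟩ hv₀aff (j := j) (by omega)
            rw [hv₀eq] at this
            omega
        have hv₁step : D (v₀ * sPerm n j)⁻¹ (v₀ * sPerm n j)
            = D (sPerm n j) (D z' (sPerm n j)) := by
          have := dem_step hn ⟨hassoc, hclose, hunit, hgen⟩ hv₀aff (j := j) hv₀up
          rw [hv₀eq] at this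
          exact this
        by_cases hcomm : sPerm n j * z' = z' * sPerm n j
        · -- commuting case : z = z' * s_j
          obtain ⟨hfix1, hfix2⟩ := commute_fix hn hz'aff hz'inv hcomm hz'asc
          have hsz : sPerm n j * (z' * sPerm n j) = z' := by
            rw [← mul_assoc, hcomm, mul_assoc, s_mul_self hn, mul_one]
          have hzeq : D w⁻¹ w = z' * sPerm n j := by
            rw [hstep, hDz's,
              (D_left hn ⟨hassoc, hclose, hunit, hgen⟩ (affLen n (z' * sPerm n j))
                (z' * sPerm n j) hzsaff rfl j).2 (by rw [hsz]; omega)]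
          have hnewinv : ∀ x : ℤ, (z' * sPerm n j) ((z' * sPerm n j) x) = x := by
            intro x
            have hmul : (z' * sPerm n j) * (z' * sPerm n j) = 1 := by
              calc (z' * sPerm n j) * (z' * sPerm n j)
                  = z' * ((sPerm n j * z') * sPerm n j) := by group
                _ = z' * ((z' * sPerm n j) * sPerm n j) := by rw [hcomm]
                _ = (z' * z') * (sPerm n j * sPerm n j) := by group
                _ = 1 := by rw [invol_mul_self hz'inv, s_mul_self hn, mul_one]
            have := perm_eq_pointwise hmul x
            simpa using this
          have habs : absLen n (z' * sPerm n j) = absLen n z' + 1 :=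
            abs_commute hn hz'aff hz'inv hfix1 hfix2
          have hzlen : affLen n (z' * sPerm n j) = affLen n z' + 1 := hup
          rw [hzeq]
          refine ⟨hzsaff, hnewinv, by omega, v₀ * sPerm n j,
            aff_mul hn hv₀aff (aff_s hn j), ?_, ?_⟩
          · rw [hv₁step, hDz's,
              (D_left hn ⟨hassoc, hclose, hunit, hgen⟩ (affLen n (z' * sPerm n j))
                (z' * sPerm n j) hzsaff rfl j).2 (by rw [hsz]; omega)]
          · omega
        · -- non-commuting case : z = s_j * (z' * s_j)
          have hup2 : affLen n (sPerm n j * (z' * sPerm n j))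
              = affLen n (z' * sPerm n j) + 1 := by
            rcases len_ldichot hn hzsaff j with h | h
            · exact h
            · exfalso
              apply hcomm
              apply lifting hn hz'aff (i := j) (j := j) ?_ hup (by omega)
              rw [invol_len_s hn hz'aff hz'inv j]
              exact hup
          have hzeq : D w⁻¹ w = sPerm n j * (z' * sPerm n j) := by
            rw [hstep, hDz's,
              (D_left hn ⟨hassoc, hclose, hunit, hgen⟩ (affLen n (z' * sPerm n j))
                (z' * sPerm n j) hzsaff rfl j).1 hup2]
          have hconjaff : IsAffine n (sPerm n j * (z' * sPerm n j)) :=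
            aff_mul hn (aff_s hn j) hzsaff
          have hnewinv : ∀ x : ℤ, (sPerm n j * (z' * sPerm n j))
              ((sPerm n j * (z' * sPerm n j)) x) = x := by
            intro x
            have hmul : (sPerm n j * (z' * sPerm n j)) * (sPerm n j * (z' * sPerm n j)) = 1 := by
              have e1 : (sPerm n j * (z' * sPerm n j)) * (sPerm n j * (z' * sPerm n j))
                  = sPerm n j * (z' * ((sPerm n j * sPerm n j) * (z' * sPerm n j))) := by
                simp only [mul_assoc]
              rw [e1, s_mul_self hn, one_mul, ← mul_assoc z' z', invol_mul_self hz'inv,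
                one_mul, s_mul_self hn]
            have := perm_eq_pointwise hmul x
            simpa using this
          have habs : absLen n (sPerm n j * (z' * sPerm n j)) = absLen n z' := by
            have := abs_conj hn hz'aff hz'inv hz'asc
            rw [mul_assoc] at this
            exact this
          have hzlen : affLen n (sPerm n j * (z' * sPerm n j)) = affLen n z' + 2 := by
            omega
          rw [hzeq]
          refine ⟨hconjaff, hnewinv, by omega, v₀ * sPerm n j,
            aff_mul hn hv₀aff (aff_s hn j), ?_, ?_⟩
          · rw [hv₁step, hDz's,
              (D_left hn ⟨hassoc, hclose, hunit, hgen⟩ (affLen n (z' * sPerm n j))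
                (z' * sPerm n j) hzsaff rfl j).1 hup2]
          · omega
      · -- descent of z' at j : z = z'
        have hDz's : D z' (sPerm n j) = z' := (hgen z' hz'aff j).1 (by omega)
        have hsz' : affLen n z' = affLen n (sPerm n j * z') + 1 := by
          rw [invol_len_s hn hz'aff hz'inv j]
          omega
        have hzeq : D w⁻¹ w = z' := by
          rw [hstep, hDz's,
            (D_left hn ⟨hassoc, hclose, hunit, hgen⟩ (affLen n z') z' hz'aff rfl j).2 hsz']
        rw [hzeq]
        exact ⟨hz'aff, hz'inv, by omega, v₀, hv₀aff, hv₀eq, by omega⟩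

end AtomAux

/-- Every atom `w ∈ A(z)` of `z ∈ Ĩ_n` has length `ℓ(w) = ℓ̂(z) = (ℓ(z) + ℓ'(z))/2`. -/
theorem atom_length (n : ℕ) (hn : 2 ≤ n)
    (D : Equiv.Perm ℤ → Equiv.Perm ℤ → Equiv.Perm ℤ) (hD : IsDemazure n D)
    (z : Equiv.Perm ℤ) (hz : IsAffine n z) (hzinv : ∀ x : ℤ, z (z x) = x)
    (w : Equiv.Perm ℤ) (hw : IsAtomOf n D z w) :
    2 * affLen n w = affLen n z + absLen n z := by
  obtain ⟨hwaff, hwz, hmin⟩ := hw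
  obtain ⟨_, _, hbd, v, hvaff, hveq, hvlen⟩ :=
    AtomAux.main_ind hn hD (affLen n w) w hwaff rfl
  rw [hwz] at hbd hveq hvlen
  have h1 := hmin v hvaff hveq
  omega
end

section
/- For z ∈ Ĩ_n and i ∈ ℤ, the Demazure conjugate satisfies: s_i ∘ z ∘ s_i = s_i z s_i if z(i) < z(i+1) and z s_i ≠ s_i z; s_i ∘ z ∘ s_i = z s_i if z(i) < z(i+1) and z s_i = s_i z; and s_i ∘ z ∘ s_i = z if z(i) > z(i+1). Moreover, when z(i) < z(i+1), z s_i = s_i z if and only if both i and i+1 are fixed points of z. -/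
open Finset

theorem Equiv.Perm.apply_inv_self {α : Type*} (f : Equiv.Perm α) (x : α) : f (f⁻¹ x) = x :=
  f.apply_symm_apply x

theorem Equiv.Perm.inv_apply_self {α : Type*} (f : Equiv.Perm α) (x : α) : f⁻¹ (f x) = x :=
  f.symm_apply_apply x

namespace DemAux

/-- canonical representative in `[1, n]` of the residue class of `x`. -/
def rep (n : ℕ) (x : ℤ) : ℤ := (x - 1) % (n : ℤ) + 1

lemma rep_one_le {n : ℕ} (hn : 0 < n) (x : ℤ) : 1 ≤ rep n x := by
  have := Int.emod_nonneg (x - 1) (show (n:ℤ) ≠ 0 by exact_mod_cast hn.ne')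
  unfold rep; omega

lemma rep_le {n : ℕ} (hn : 0 < n) (x : ℤ) : rep n x ≤ n := by
  have := Int.emod_lt_of_pos (x - 1) (show (0:ℤ) < n by exact_mod_cast hn)
  unfold rep; omega

lemma rep_dvd (n : ℕ) (x : ℤ) : (n:ℤ) ∣ x - rep n x := by
  refine ⟨(x - 1) / n, ?_⟩
  have h := Int.emod_def (x - 1) (n : ℤ)
  unfold rep; omega

lemma dvd_in_range {n : ℕ} {x y : ℤ} (hx1 : 1 ≤ x) (hx2 : x ≤ n) (hy1 : 1 ≤ y)
    (hy2 : y ≤ n) (h : (n:ℤ) ∣ x - y) : x = y := by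
  have := Int.eq_zero_of_abs_lt_dvd h (abs_lt.mpr ⟨by omega, by omega⟩); omega

lemma rep_shift (n : ℕ) (x k : ℤ) : rep n (x + k * n) = rep n x := by
  unfold rep
  rw [show x + k * n - 1 = (x - 1) + k * n by ring, Int.add_mul_emod_self_right]

lemma rep_eq_self {n : ℕ} {x : ℤ} (h1 : 1 ≤ x) (h2 : x ≤ n) : rep n x = x := by
  unfold rep; rw [Int.emod_eq_of_lt (by omega) (by omega)]; ring

lemma rep_eq_of_dvd {n : ℕ} (hn : 0 < n) {x y : ℤ} (h : (n:ℤ) ∣ x - y) :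
    rep n x = rep n y := by
  obtain ⟨c, hc⟩ := h
  have : x = y + c * n := by linarith
  rw [this, rep_shift]

/- ### facts about the simple reflections -/

lemma not_both {n : ℕ} (hn : 2 ≤ n) {x i : ℤ} (h1 : (n:ℤ) ∣ x - i)
    (h2 : (n:ℤ) ∣ x - (i+1)) : False := by
  have : (n:ℤ) ∣ 1 := by have := Int.dvd_sub h1 h2; simpa using this
  have := Int.le_of_dvd one_pos this; omega

lemma sApp (n : ℕ) (i x : ℤ) :
    sPerm n i x = if (n:ℤ) ∣ x - i then x + 1 else if (n:ℤ) ∣ x - (i+1) then x - 1 else x := by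
  show tFun n i (i+1) x = _
  unfold tFun
  rw [show i + 1 - i = 1 by ring]

lemma sApp_of_dvd {n : ℕ} {i x : ℤ} (h : (n:ℤ) ∣ x - i) : sPerm n i x = x + 1 := by
  rw [sApp, if_pos h]

lemma sApp_of_dvd' {n : ℕ} (hn : 2 ≤ n) {i x : ℤ} (h : (n:ℤ) ∣ x - (i+1)) :
    sPerm n i x = x - 1 := by
  rw [sApp, if_neg (fun h' => not_both hn h' h), if_pos h]

lemma sApp_of_not_dvd {n : ℕ} {i x : ℤ} (h : ¬ (n:ℤ) ∣ x - i) (h' : ¬ (n:ℤ) ∣ x - (i+1)) :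
    sPerm n i x = x := by
  rw [sApp, if_neg h, if_neg h']

lemma s_close (n : ℕ) (i x : ℤ) : x - 1 ≤ sPerm n i x ∧ sPerm n i x ≤ x + 1 := by
  rw [sApp]; split_ifs <;> omega

lemma s_equivariant (n : ℕ) (i x : ℤ) : sPerm n i (x + n) = sPerm n i x + n := by
  have h1 : ((n:ℤ) ∣ x + n - i) ↔ ((n:ℤ) ∣ x - i) := by
    constructor <;> intro h
    · have := Int.dvd_sub h (Int.dvd_refl n); simpa [show x + n - i - n = x - i by ring] using this
    · have := Int.dvd_add h (Int.dvd_refl n); simpa [show x - i + n = x + n - i by ring] using this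
  have h2 : ((n:ℤ) ∣ x + n - (i+1)) ↔ ((n:ℤ) ∣ x - (i+1)) := by
    constructor <;> intro h
    · have := Int.dvd_sub h (Int.dvd_refl n); simpa [show x + n - (i+1) - n = x - (i+1) by ring] using this
    · have := Int.dvd_add h (Int.dvd_refl n); simpa [show x - (i+1) + n = x + n - (i+1) by ring] using this
  rw [sApp, sApp]
  split_ifs with a b c d e <;> first | omega | (exfalso; tauto)
/- ### equivariance machinery -/

lemma equiv_mul {n : ℕ} {w : Equiv.Perm ℤ} (hw : ∀ x : ℤ, w (x + n) = w x + n) :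
    ∀ (k x : ℤ), w (x + k * n) = w x + k * n := by
  have hneg : ∀ x : ℤ, w (x - n) = w x - n := by
    intro x; have h := hw (x - n); rw [sub_add_cancel] at h; omega
  intro k
  induction k using Int.induction_on with
  | zero => simp
  | succ k ih =>
    intro x
    have h1 : x + (k + 1) * n = (x + k * n) + n := by ring
    rw [h1, hw, ih]; ring
  | pred k ih =>
    intro x
    have h1 : x + (-k - 1) * n = (x + (-k) * n) - n := by ring
    rw [h1, hneg, ih]; ring

lemma inv_equivariant {n : ℕ} {w : Equiv.Perm ℤ} (hw : ∀ x : ℤ, w (x + n) = w x + n)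
    (x : ℤ) : w⁻¹ (x + n) = w⁻¹ x + n := by
  apply w.injective
  rw [Equiv.Perm.apply_inv_self, hw, Equiv.Perm.apply_inv_self]

lemma mod_inj {n : ℕ} {w : Equiv.Perm ℤ} (hw : ∀ x : ℤ, w (x + n) = w x + n)
    {x y : ℤ} (h : (n:ℤ) ∣ w x - w y) : (n:ℤ) ∣ x - y := by
  obtain ⟨c, hc⟩ := h
  have h2 : w x = w (y + c * n) := by
    rw [equiv_mul hw]; linarith [mul_comm (n:ℤ) c]
  have := w.injective h2
  exact ⟨c, by linarith [mul_comm (n:ℤ) c]⟩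

lemma mod_map {n : ℕ} {w : Equiv.Perm ℤ} (hw : ∀ x : ℤ, w (x + n) = w x + n)
    {x y : ℤ} (h : (n:ℤ) ∣ x - y) : (n:ℤ) ∣ w x - w y := by
  obtain ⟨c, hc⟩ := h
  have hx : x = y + c * n := by linarith [mul_comm (n:ℤ) c]
  rw [hx, equiv_mul hw]
  exact ⟨c, by ring⟩

/- ### s is an involution; s depends only on i mod n -/

lemma s_mul_self (n : ℕ) (hn : 2 ≤ n) (i : ℤ) : sPerm n i * sPerm n i = 1 := by
  apply Equiv.ext
  intro x
  simp only [Equiv.Perm.mul_apply, Equiv.Perm.one_apply]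
  by_cases h1 : (n:ℤ) ∣ x - i
  · rw [sApp_of_dvd h1, sApp_of_dvd' hn (by simpa [show x + 1 - (i+1) = x - i by ring] using h1)]
    ring
  · by_cases h2 : (n:ℤ) ∣ x - (i+1)
    · rw [sApp_of_dvd' hn h2, sApp_of_dvd (by simpa [show x - 1 - i = x - (i+1) by ring] using h2)]
      ring
    · rw [sApp_of_not_dvd h1 h2, sApp_of_not_dvd h1 h2]

lemma s_inv (n : ℕ) (hn : 2 ≤ n) (i : ℤ) : (sPerm n i)⁻¹ = sPerm n i := by
  rw [eq_comm, eq_inv_iff_mul_eq_one, s_mul_self n hn i]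

lemma s_congr {n : ℕ} {i j : ℤ} (h : (n:ℤ) ∣ i - j) : sPerm n i = sPerm n j := by
  apply Equiv.ext
  intro x
  have e1 : ((n:ℤ) ∣ x - i) ↔ ((n:ℤ) ∣ x - j) := by
    constructor <;> intro hx
    · have := Int.dvd_add hx h; simpa [show x - i + (i - j) = x - j by ring] using this
    · have := Int.dvd_sub hx h; simpa [show x - j - (i - j) = x - i by ring] using this
  have e2 : ((n:ℤ) ∣ x - (i+1)) ↔ ((n:ℤ) ∣ x - (j+1)) := by
    constructor <;> intro hx
    · have := Int.dvd_add hx h; simpa [show x - (i+1) + (i - j) = x - (j+1) by ring] using this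
    · have := Int.dvd_sub hx h; simpa [show x - (j+1) - (i - j) = x - (i+1) by ring] using this
  rw [sApp, sApp]
  split_ifs with a b c d e <;> first | rfl | (exfalso; tauto)
/- ### affineness of products, inverses, and simple reflections -/

lemma rep_w_inv {n : ℕ} (hn : 0 < n) {w : Equiv.Perm ℤ}
    (hw : ∀ x : ℤ, w (x + n) = w x + n) {x : ℤ} :
    rep n (w⁻¹ (rep n (w x))) = rep n x := by
  obtain ⟨c, hc⟩ := rep_dvd n (w x)
  have e : rep n (w x) = w x + (-c) * (n:ℤ) := by
    have : (-c) * (n:ℤ) = -((n:ℤ) * c) := by ring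
    linarith
  have h2 : w⁻¹ (rep n (w x)) = x + (-c) * n := by
    apply w.injective
    rw [Equiv.Perm.apply_inv_self, equiv_mul hw, ← e]
  rw [h2, rep_shift]

lemma sum_periodic {n : ℕ} (hn : 0 < n) {w : Equiv.Perm ℤ}
    (hw : ∀ x : ℤ, w (x + n) = w x + n) (g : ℤ → ℤ)
    (hg : ∀ (x k : ℤ), g (x + k * n) = g x) :
    ∑ i ∈ Finset.Icc (1:ℤ) (n:ℤ), g (w i) = ∑ i ∈ Finset.Icc (1:ℤ) (n:ℤ), g i := by
  have hinv : ∀ x : ℤ, w⁻¹ (x + n) = w⁻¹ x + n := inv_equivariant hw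
  refine Finset.sum_nbij' (fun x => rep n (w x)) (fun y => rep n (w⁻¹ y)) ?_ ?_ ?_ ?_ ?_
  · intro a _; rw [Finset.mem_Icc]; exact ⟨rep_one_le hn _, rep_le hn _⟩
  · intro a _; rw [Finset.mem_Icc]; exact ⟨rep_one_le hn _, rep_le hn _⟩
  · intro a ha
    rw [Finset.mem_Icc] at ha
    show rep n (w⁻¹ (rep n (w a))) = a
    rw [rep_w_inv hn hw, rep_eq_self ha.1 ha.2]
  · intro a ha
    rw [Finset.mem_Icc] at ha
    show rep n (w (rep n (w⁻¹ a))) = a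
    have h := rep_w_inv hn (w := w⁻¹) hinv (x := a)
    simp only [inv_inv] at h
    rw [h, rep_eq_self ha.1 ha.2]
  · intro a _
    obtain ⟨c, hc⟩ := rep_dvd n (w a)
    show g (w a) = g (rep n (w a))
    have : g (w a) = g (rep n (w a) + c * n) := by
      congr 1
      have : c * (n:ℤ) = (n:ℤ) * c := by ring
      linarith
    rw [this, hg]

lemma isAffine_one (n : ℕ) : IsAffine n 1 := by
  constructor
  · intro x; simp
  · simp

lemma isAffine_mul {n : ℕ} (hn : 0 < n) {u v : Equiv.Perm ℤ}
    (hu : IsAffine n u) (hv : IsAffine n v) : IsAffine n (u * v) := by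
  obtain ⟨hu1, hu2⟩ := hu
  obtain ⟨hv1, hv2⟩ := hv
  constructor
  · intro x
    simp only [Equiv.Perm.mul_apply]
    rw [hv1, hu1]
  · have key : ∑ i ∈ Finset.Icc (1:ℤ) (n:ℤ), ((u * v) i - i)
        = ∑ i ∈ Finset.Icc (1:ℤ) (n:ℤ), ((u (v i) - v i) + (v i - i)) := by
      apply Finset.sum_congr rfl; intro x _; simp [Equiv.Perm.mul_apply]
    rw [key, Finset.sum_add_distrib]
    have h2 : ∑ i ∈ Finset.Icc (1:ℤ) (n:ℤ), (u (v i) - v i)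
        = ∑ i ∈ Finset.Icc (1:ℤ) (n:ℤ), (u i - i) := by
      apply sum_periodic hn hv1 (fun x => u x - x)
      intro x k
      rw [equiv_mul hu1]; ring
    rw [h2, hu2, hv2]; ring

lemma isAffine_inv {n : ℕ} (hn : 0 < n) {w : Equiv.Perm ℤ}
    (hw : IsAffine n w) : IsAffine n w⁻¹ := by
  obtain ⟨hw1, hw2⟩ := hw
  refine ⟨inv_equivariant hw1, ?_⟩
  have hinv := inv_equivariant hw1
  have hg : ∀ (x k : ℤ), (fun x => w⁻¹ x - x) (x + k * n) = (fun x => w⁻¹ x - x) x := by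
    intro x k; simp only; rw [equiv_mul hinv]; ring
  have h2 := sum_periodic hn hw1 (fun x => w⁻¹ x - x) hg
  have h3 : ∑ i ∈ Finset.Icc (1:ℤ) (n:ℤ), (w⁻¹ (w i) - w i)
      = ∑ i ∈ Finset.Icc (1:ℤ) (n:ℤ), (i - w i) := by
    apply Finset.sum_congr rfl; intro x _; rw [Equiv.Perm.inv_apply_self]
  rw [← h2, h3]
  have h4 : ∑ i ∈ Finset.Icc (1:ℤ) (n:ℤ), (i - w i)
      = - ∑ i ∈ Finset.Icc (1:ℤ) (n:ℤ), (w i - i) := by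
    rw [← Finset.sum_neg_distrib]
    apply Finset.sum_congr rfl; intro x _; ring
  rw [h4, hw2]; ring

lemma isAffine_s {n : ℕ} (hn : 2 ≤ n) (i : ℤ) : IsAffine n (sPerm n i) := by
  constructor
  · exact s_equivariant n i
  · have key : ∀ x : ℤ, sPerm n i x - x =
        (if (n:ℤ) ∣ x - i then 1 else 0) - (if (n:ℤ) ∣ x - (i+1) then 1 else 0) := by
      intro x
      rw [sApp]
      by_cases h1 : (n:ℤ) ∣ x - i
      · rw [if_pos h1, if_pos h1, if_neg (fun h2 => not_both hn h1 h2)]; ring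
      · rw [if_neg h1, if_neg h1]
        by_cases h2 : (n:ℤ) ∣ x - (i+1)
        · rw [if_pos h2, if_pos h2]; ring
        · rw [if_neg h2, if_neg h2]; ring
    have count : ∀ c : ℤ, ∑ x ∈ Finset.Icc (1:ℤ) (n:ℤ), (if (n:ℤ) ∣ x - c then (1:ℤ) else 0) = 1 := by
      intro c
      rw [← Finset.sum_filter]
      have hfil : Finset.filter (fun x => (n:ℤ) ∣ x - c) (Finset.Icc (1:ℤ) (n:ℤ)) = {rep n c} := by
        apply Finset.ext
        intro x
        simp only [Finset.mem_filter, Finset.mem_Icc, Finset.mem_singleton]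
        constructor
        · rintro ⟨⟨h1, h2⟩, h3⟩
          have h4 := rep_dvd n c
          have h5 : (n:ℤ) ∣ x - rep n c := by
            have := Int.dvd_add h3 h4
            simpa [show x - c + (c - rep n c) = x - rep n c by ring] using this
          exact dvd_in_range h1 h2 (rep_one_le (by omega) c) (rep_le (by omega) c) h5
        · rintro rfl
          refine ⟨⟨rep_one_le (by omega) c, rep_le (by omega) c⟩, ?_⟩
          rw [show rep n c - c = -(c - rep n c) by ring]
          exact (Int.dvd_neg).mpr (rep_dvd n c)
      rw [hfil]
      simp
    have hsum : ∑ x ∈ Finset.Icc (1:ℤ) (n:ℤ), (sPerm n i x - x)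
        = ∑ x ∈ Finset.Icc (1:ℤ) (n:ℤ), ((if (n:ℤ) ∣ x - i then (1:ℤ) else 0) - (if (n:ℤ) ∣ x - (i+1) then (1:ℤ) else 0)) := by
      apply Finset.sum_congr rfl; intro x _; exact key x
    rw [hsum, Finset.sum_sub_distrib, count, count]; ring
/- ### inversion sets -/

def InvSet (n : ℕ) (w : Equiv.Perm ℤ) : Set (ℤ × ℤ) :=
  {p | 1 ≤ p.1 ∧ p.1 ≤ (n:ℤ) ∧ p.1 < p.2 ∧ w p.2 < w p.1}

lemma affLen_eq (n : ℕ) (w : Equiv.Perm ℤ) : affLen n w = (InvSet n w).ncard := by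
  rw [affLen, ← Nat.card_coe_set_eq]
  rfl

def normP (n : ℕ) (p : ℤ × ℤ) : ℤ × ℤ := (rep n p.1, p.2 + (rep n p.1 - p.1))

lemma normP_shift (n : ℕ) (a b k : ℤ) :
    normP n (a + k * n, b + k * n) = normP n (a, b) := by
  unfold normP
  simp only [rep_shift]
  rw [Prod.mk.injEq]
  exact ⟨rfl, by ring⟩

lemma normP_eq_self {n : ℕ} {a b : ℤ} (h1 : 1 ≤ a) (h2 : a ≤ n) :
    normP n (a, b) = (a, b) := by
  unfold normP
  simp only [rep_eq_self h1 h2]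
  rw [Prod.mk.injEq]
  exact ⟨rfl, by ring⟩

lemma normP_mem {n : ℕ} (hn : 0 < n) {w : Equiv.Perm ℤ}
    (hw : ∀ x : ℤ, w (x + n) = w x + n) {a b : ℤ} (hab : a < b) (hi : w b < w a) :
    normP n (a, b) ∈ InvSet n w := by
  obtain ⟨c, hc⟩ := rep_dvd n a
  have e1 : rep n a = a + (-c) * (n:ℤ) := by
    have : (-c) * (n:ℤ) = -((n:ℤ) * c) := by ring
    linarith
  have e2 : b + (rep n a - a) = b + (-c) * (n:ℤ) := by linarith
  refine ⟨rep_one_le hn a, rep_le hn a, ?_, ?_⟩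
  · show rep n a < b + (rep n a - a)
    omega
  · show w (b + (rep n a - a)) < w (rep n a)
    rw [e2, e1, equiv_mul hw, equiv_mul hw]
    linarith

lemma invSet_finite {n : ℕ} (hn : 0 < n) {w : Equiv.Perm ℤ}
    (hw : ∀ x : ℤ, w (x + n) = w x + n) : (InvSet n w).Finite := by
  have hne : (Finset.Icc (1:ℤ) (n:ℤ)).Nonempty := ⟨1, by simp; omega⟩
  set M := (Finset.Icc (1:ℤ) (n:ℤ)).sup' hne w with hM
  set m := (Finset.Icc (1:ℤ) (n:ℤ)).inf' hne w with hm
  apply Set.Finite.subset (Set.finite_Icc ((1:ℤ), (2:ℤ)) ((n:ℤ), (n:ℤ) + (M - m)))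
  rintro ⟨p1, p2⟩ hp
  obtain ⟨h1, h2, h3, h4⟩ := hp
  dsimp only at h1 h2 h3 h4
  have hp1M : w p1 ≤ M := Finset.le_sup' w (by simp [Finset.mem_Icc]; omega)
  obtain ⟨c, hc⟩ := rep_dvd n p2
  have hr1 := rep_one_le hn p2
  have hr2 := rep_le hn p2
  have hmw : m ≤ w (rep n p2) := Finset.inf'_le w (by simp [Finset.mem_Icc]; omega)
  have hcomm : c * (n:ℤ) = (n:ℤ) * c := by ring
  have e1 : p2 = rep n p2 + c * (n:ℤ) := by linarith
  have hwp2 : w p2 = w (rep n p2) + c * n := by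
    conv_lhs => rw [e1]
    rw [equiv_mul hw]
  have hc0 : 0 ≤ c := by
    by_contra hneg
    push_neg at hneg
    have h5 : c ≤ -1 := by omega
    have h6 : c * (n:ℤ) ≤ (-1) * n := by
      apply mul_le_mul_of_nonneg_right h5 (by positivity)
    linarith
  have hcn : c * (n:ℤ) ≤ M - m := by linarith
  constructor
  · exact Prod.mk_le_mk.mpr ⟨h1, by linarith⟩
  · exact Prod.mk_le_mk.mpr ⟨h2, by linarith⟩
/- ### the length-change lemma -/

lemma s_s {n : ℕ} (hn : 2 ≤ n) (j x : ℤ) : sPerm n j (sPerm n j x) = x := by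
  have h := s_mul_self n hn j
  have h2 := congrArg (fun e : Equiv.Perm ℤ => e x) h
  simpa using h2

lemma s_flip {n : ℕ} (hn : 2 ≤ n) {j b c : ℤ} (hbc : b < c)
    (h : sPerm n j c < sPerm n j b) : c = b + 1 ∧ (n:ℤ) ∣ b - j := by
  have hb := s_close n j b
  have hc := s_close n j c
  have hcb : c = b + 1 := by omega
  have hsb : sPerm n j b = b + 1 := by omega
  refine ⟨hcb, ?_⟩
  by_contra hnd
  by_cases h2 : (n:ℤ) ∣ b - (j+1)
  · rw [sApp_of_dvd' hn h2] at hsb; omega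
  · rw [sApp_of_not_dvd hnd h2] at hsb; omega

lemma noflip {n : ℕ} (hn : 2 ≤ n) {w : Equiv.Perm ℤ}
    (hw : ∀ x : ℤ, w (x + n) = w x + n) {j : ℤ} (hasc : w j < w (j+1))
    {a b : ℤ} (hab : a < b) (hinv : w b < w a) : sPerm n j a < sPerm n j b := by
  rcases lt_trichotomy (sPerm n j a) (sPerm n j b) with h | h | h
  · exact h
  · exact absurd ((sPerm n j).injective h) (by omega)
  · exfalso
    obtain ⟨hb1, hdvd⟩ := s_flip hn hab h
    obtain ⟨c, hc⟩ := hdvd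
    have ha' : a = j + c * n := by
      have : c * (n:ℤ) = (n:ℤ) * c := by ring
      linarith
    have h1 : w a = w j + c * n := by rw [ha', equiv_mul hw]
    have h2 : w b = w (j+1) + c * n := by
      rw [hb1, ha', show j + c * (n:ℤ) + 1 = (j + 1) + c * n by ring, equiv_mul hw]
    linarith

lemma affLen_mul_s_of_asc {n : ℕ} (hn : 2 ≤ n) {w : Equiv.Perm ℤ} (hwa : IsAffine n w)
    {j : ℤ} (hasc : w j < w (j+1)) :
    affLen n (w * sPerm n j) = affLen n w + 1 := by
  obtain ⟨hw, -⟩ := hwa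
  have hn0 : 0 < n := by omega
  set s : Equiv.Perm ℤ := sPerm n j with hs
  have hse : ∀ (x k : ℤ), s (x + k * n) = s x + k * n := fun x k => equiv_mul (s_equivariant n j) k x
  have hss : ∀ x : ℤ, s (s x) = x := s_s hn j
  have hws : ∀ x : ℤ, (w * s) (x + n) = (w * s) x + n := by
    intro x
    simp only [Equiv.Perm.mul_apply]
    rw [show x + (n:ℤ) = x + 1 * n by ring, hse, show s x + 1 * (n:ℤ) = s x + n by ring, hw]
  have hrj1 : (n:ℤ) ∣ rep n j - j := by
    rw [show rep n j - j = -(j - rep n j) by ring]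
    exact (Int.dvd_neg).mpr (rep_dvd n j)
  -- the extra inversion
  set e : ℤ × ℤ := (rep n j, rep n j + 1) with he
  set Φ : ℤ × ℤ → ℤ × ℤ := fun p => normP n (s p.1, s p.2) with hΦ
  have hsrep : s (rep n j) = rep n j + 1 := sApp_of_dvd hrj1
  have hsrep1 : s (rep n j + 1) = rep n j := by
    rw [sApp_of_dvd' hn (by simpa [show rep n j + 1 - (j+1) = rep n j - j by ring] using hrj1)]
    ring
  have hrj1' := hrj1
  obtain ⟨c0, hc0⟩ := hrj1'
  have hrj : rep n j = j + c0 * n := by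
    have : c0 * (n:ℤ) = (n:ℤ) * c0 := by ring
    linarith
  have hmem_e : e ∈ InvSet n (w * s) := by
    refine ⟨rep_one_le hn0 j, rep_le hn0 j, by simp only [he]; omega, ?_⟩
    show (w * s) (rep n j + 1) < (w * s) (rep n j)
    simp only [Equiv.Perm.mul_apply]
    rw [hsrep, hsrep1, hrj, show j + c0 * (n:ℤ) + 1 = (j+1) + c0 * n by ring,
      equiv_mul hw, equiv_mul hw]
    linarith
  have himg : ∀ q ∈ InvSet n w, Φ q ∈ InvSet n (w * s) := by
    rintro ⟨q1, q2⟩ ⟨h1, h2, h3, h4⟩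
    dsimp only at h1 h2 h3 h4
    have hlt : s q1 < s q2 := noflip hn hw hasc h3 h4
    have hinv : (w * s) (s q2) < (w * s) (s q1) := by
      simp only [Equiv.Perm.mul_apply, hss]
      exact h4
    exact normP_mem hn0 hws hlt hinv
  have hnotmem : e ∉ Φ '' InvSet n w := by
    rintro ⟨q, hq, heq⟩
    obtain ⟨q1, q2⟩ := q
    obtain ⟨h1, h2, h3, h4⟩ := hq
    dsimp only at h1 h2 h3 h4
    simp only [hΦ, he, normP, Prod.mk.injEq] at heq
    obtain ⟨he1, he2⟩ := heq
    -- he1 : rep n (s q1) = rep n j ; he2 : s q2 + (rep n (s q1) - s q1) = rep n j + 1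
    have hsq2 : s q2 = s q1 + 1 := by rw [he1] at he2; omega
    have hd : (n:ℤ) ∣ s q1 - j := by
      obtain ⟨a, ha⟩ := rep_dvd n (s q1)
      rw [he1] at ha
      obtain ⟨b, hb⟩ := hrj1
      exact ⟨a + b, by linarith [mul_add (n:ℤ) a b]⟩
    obtain ⟨c, hc⟩ := hd
    have hsq1 : s q1 = j + c * n := by
      have : c * (n:ℤ) = (n:ℤ) * c := by ring
      linarith
    have hq1 : q1 = j + 1 + c * n := by
      have := hss q1
      rw [hsq1, show j + c * (n:ℤ) = j + c * n by ring] at this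
      rw [← this, hse, sApp_of_dvd (by simp)]
    have hq2 : q2 = j + c * n := by
      have := hss q2
      rw [hsq2, hsq1, show j + c * (n:ℤ) + 1 = (j + 1) + c * n by ring] at this
      rw [← this, hse, sApp_of_dvd' hn (by simp)]
      ring
    omega
  have hsubset : InvSet n (w * s) ⊆ insert e (Φ '' InvSet n w) := by
    rintro ⟨p1, p2⟩ ⟨h1, h2, h3, h4⟩
    dsimp only at h1 h2 h3 h4
    have h4' : w (s p2) < w (s p1) := h4
    rcases lt_trichotomy (s p1) (s p2) with hlt | heqs | hgt
    · right
      refine ⟨normP n (s p1, s p2), normP_mem hn0 hw hlt h4', ?_⟩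
      obtain ⟨c, hc⟩ := rep_dvd n (s p1)
      have e1 : rep n (s p1) = s p1 + (-c) * (n:ℤ) := by
        have : (-c) * (n:ℤ) = -((n:ℤ) * c) := by ring
        linarith
      have e2 : normP n (s p1, s p2) = (s p1 + (-c) * n, s p2 + (-c) * n) := by
        simp only [normP]
        rw [Prod.mk.injEq]
        exact ⟨e1, by linarith⟩
      rw [e2]
      show normP n (s (s p1 + (-c) * n), s (s p2 + (-c) * n)) = (p1, p2)
      rw [hse, hse, hss, hss, normP_shift, normP_eq_self h1 h2]
    · exact absurd (s.injective heqs) (by omega)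
    · left
      obtain ⟨hp21, hdvd⟩ := s_flip hn h3 hgt
      have : p1 = rep n j := by
        refine dvd_in_range h1 h2 (rep_one_le hn0 j) (rep_le hn0 j) ?_
        obtain ⟨a, ha⟩ := hdvd
        obtain ⟨b, hb⟩ := hrj1
        exact ⟨a - b, by linarith [mul_sub (n:ℤ) a b]⟩
      rw [he, Prod.mk.injEq]
      omega
  have hsup : insert e (Φ '' InvSet n w) ⊆ InvSet n (w * s) := by
    intro p hp
    rcases Set.mem_insert_iff.mp hp with rfl | ⟨q, hq, rfl⟩
    · exact hmem_e
    · exact himg q hq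
  have hseteq : InvSet n (w * s) = insert e (Φ '' InvSet n w) :=
    Set.Subset.antisymm hsubset hsup
  have hinj : Set.InjOn Φ (InvSet n w) := by
    rintro ⟨q1, q2⟩ ⟨hq1, hq2, hq3, hq4⟩ ⟨q1', q2'⟩ ⟨hq1', hq2', hq3', hq4'⟩ heq
    dsimp only at hq1 hq2 hq3 hq4 hq1' hq2' hq3' hq4'
    simp only [hΦ, normP, Prod.mk.injEq] at heq
    obtain ⟨he1, he2⟩ := heq
    obtain ⟨c, hc⟩ := rep_dvd n (s q1)
    obtain ⟨c', hc'⟩ := rep_dvd n (s q1')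
    -- s q1 = rep + n c, s q1' = rep + n c'
    have key1 : q1 = q1' + (c - c') * n := by
      have h5 : s q1 = s q1' + (c - c') * n := by
        have : (c - c') * (n:ℤ) = (n:ℤ) * c - (n:ℤ) * c' := by ring
        linarith
      calc q1 = s (s q1) := (hss q1).symm
        _ = s (s q1' + (c - c') * n) := by rw [h5]
        _ = q1' + (c - c') * n := by rw [hse, hss]
    have hq11' : q1 = q1' := dvd_in_range hq1 hq2 hq1' hq2' ⟨c - c', by linarith [mul_comm ((c:ℤ) - c') (n:ℤ)]⟩
    have hcc' : (c - c') * (n:ℤ) = 0 := by omega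
    have hs11' : s q1 = s q1' := by rw [hq11']
    have hs22' : s q2 = s q2' := by omega
    have hq22' : q2 = q2' := by
      calc q2 = s (s q2) := (hss q2).symm
        _ = s (s q2') := by rw [hs22']
        _ = q2' := hss q2'
    rw [Prod.mk.injEq]
    exact ⟨hq11', hq22'⟩
  rw [affLen_eq, affLen_eq, hseteq]
  have hfin : (Φ '' InvSet n w).Finite := (invSet_finite hn0 hw).image Φ
  rw [Set.ncard_insert_of_notMem hnotmem hfin, Set.ncard_image_of_injOn hinj]
/- ### descent version, inverse, zero length -/

lemma affLen_mul_s_of_desc {n : ℕ} (hn : 2 ≤ n) {w : Equiv.Perm ℤ} (hwa : IsAffine n w)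
    {j : ℤ} (hdesc : w (j+1) < w j) :
    affLen n w = affLen n (w * sPerm n j) + 1 := by
  have hn0 : 0 < n := by omega
  set s : Equiv.Perm ℤ := sPerm n j with hs
  have hu : IsAffine n (w * s) := isAffine_mul hn0 hwa (isAffine_s hn j)
  have hsj : s j = j + 1 := sApp_of_dvd (by simp)
  have hsj1 : s (j+1) = j := by
    rw [sApp_of_dvd' hn (by simp)]; ring
  have husasc : (w * s) j < (w * s) (j + 1) := by
    simp only [Equiv.Perm.mul_apply, hsj, hsj1]
    exact hdesc
  have h := affLen_mul_s_of_asc hn hu husasc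
  have hws : w * s * s = w := by
    rw [mul_assoc, s_mul_self n hn j, mul_one]
  rw [hws] at h
  omega

lemma affLen_inv {n : ℕ} (hn : 0 < n) {w : Equiv.Perm ℤ} (hwa : IsAffine n w) :
    affLen n w⁻¹ = affLen n w := by
  obtain ⟨hw, -⟩ := hwa
  have hwi : ∀ x : ℤ, w⁻¹ (x + n) = w⁻¹ x + n := inv_equivariant hw
  set Ψ : ℤ × ℤ → ℤ × ℤ := fun p => normP n (w p.2, w p.1) with hΨ
  have hseteq : InvSet n w⁻¹ = Ψ '' InvSet n w := by
    apply Set.Subset.antisymm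
    · rintro ⟨r1, r2⟩ ⟨h1, h2, h3, h4⟩
      dsimp only at h1 h2 h3 h4
      have hq : normP n (w⁻¹ r2, w⁻¹ r1) ∈ InvSet n w :=
        normP_mem hn hw h4 (by simp only [Equiv.Perm.apply_inv_self]; exact h3)
      refine ⟨normP n (w⁻¹ r2, w⁻¹ r1), hq, ?_⟩
      obtain ⟨c, hc⟩ := rep_dvd n (w⁻¹ r2)
      have e1 : rep n (w⁻¹ r2) = w⁻¹ r2 + (-c) * (n:ℤ) := by
        have : (-c) * (n:ℤ) = -((n:ℤ) * c) := by ring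
        linarith
      have e2 : normP n (w⁻¹ r2, w⁻¹ r1) = (w⁻¹ r2 + (-c) * n, w⁻¹ r1 + (-c) * n) := by
        simp only [normP]
        rw [Prod.mk.injEq]
        exact ⟨e1, by linarith⟩
      rw [e2]
      show normP n (w (w⁻¹ r1 + (-c) * n), w (w⁻¹ r2 + (-c) * n)) = (r1, r2)
      rw [equiv_mul hw, equiv_mul hw]
      simp only [Equiv.Perm.apply_inv_self]
      rw [normP_shift, normP_eq_self h1 h2]
    · rintro p ⟨q, hq, rfl⟩
      obtain ⟨q1, q2⟩ := q
      obtain ⟨h1, h2, h3, h4⟩ := hq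
      dsimp only at h1 h2 h3 h4
      show normP n (w q2, w q1) ∈ InvSet n w⁻¹
      apply normP_mem hn hwi h4
      simp only [Equiv.Perm.inv_apply_self]
      exact h3
  have hinj : Set.InjOn Ψ (InvSet n w) := by
    rintro ⟨q1, q2⟩ ⟨hq1, hq2, hq3, hq4⟩ ⟨q1', q2'⟩ ⟨hq1', hq2', hq3', hq4'⟩ heq
    dsimp only at hq1 hq2 hq3 hq4 hq1' hq2' hq3' hq4'
    simp only [hΨ, normP, Prod.mk.injEq] at heq
    obtain ⟨he1, he2⟩ := heq
    obtain ⟨c, hc⟩ := rep_dvd n (w q2)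
    obtain ⟨c', hc'⟩ := rep_dvd n (w q2')
    have hw2 : w q2 = w q2' + (c - c') * n := by
      have : (c - c') * (n:ℤ) = (n:ℤ) * c - (n:ℤ) * c' := by ring
      linarith
    have hq22 : q2 = q2' + (c - c') * n := by
      have : w q2 = w (q2' + (c - c') * n) := by rw [equiv_mul hw, ← hw2]
      exact w.injective this
    have hw1 : w q1 = w q1' + (c - c') * n := by
      have h5 : rep n (w q2) = rep n (w q2') := he1
      omega
    have hq11 : q1 = q1' + (c - c') * n := by
      have : w q1 = w (q1' + (c - c') * n) := by rw [equiv_mul hw, ← hw1]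
      exact w.injective this
    have : q1 = q1' := dvd_in_range hq1 hq2 hq1' hq2' ⟨c - c', by linarith [mul_comm ((c:ℤ) - c') (n:ℤ)]⟩
    rw [Prod.mk.injEq]
    omega
  rw [affLen_eq, affLen_eq, hseteq, Set.ncard_image_of_injOn hinj]

lemma mono_eq_one {n : ℕ} (hn : 0 < n) {w : Equiv.Perm ℤ} (hwa : IsAffine n w)
    (hmono : ∀ x : ℤ, w x < w (x+1)) : w = 1 := by
  obtain ⟨hw, hsum⟩ := hwa
  have hsm : StrictMono w := strictMono_int_of_lt_succ hmono
  have hsucc : ∀ x : ℤ, w (x+1) = w x + 1 := by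
    intro x
    have h1 : w x + 1 ≤ w (x+1) := hmono x
    have h2 : w (w⁻¹ (w x + 1)) = w x + 1 := Equiv.Perm.apply_inv_self w (w x + 1)
    have h3 : x < w⁻¹ (w x + 1) := by
      rw [← hsm.lt_iff_lt, h2]
      omega
    have h4 : x + 1 ≤ w⁻¹ (w x + 1) := h3
    have h5 : w (x+1) ≤ w (w⁻¹ (w x + 1)) := hsm.monotone h4
    omega
  have hconst : ∀ x : ℤ, w x = x + w 0 := by
    intro x
    induction x using Int.induction_on with
    | zero => ring
    | succ k ih => rw [hsucc, ih]; ring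
    | pred k ih =>
      have := hsucc (-(k:ℤ) - 1)
      rw [show -(k:ℤ) - 1 + 1 = -(k:ℤ) by ring] at this
      omega
  have hzero : w 0 = 0 := by
    have h6 : ∑ i ∈ Finset.Icc (1:ℤ) (n:ℤ), (w i - i) = ∑ i ∈ Finset.Icc (1:ℤ) (n:ℤ), w 0 := by
      apply Finset.sum_congr rfl
      intro x _
      rw [hconst]; ring
    rw [h6, Finset.sum_const, Int.card_Icc] at hsum
    have h7 : ((n:ℤ) + 1 - 1).toNat = n := by omega
    rw [h7] at hsum
    simp only [nsmul_eq_mul] at hsum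
    have : (n:ℤ) ≠ 0 := by exact_mod_cast hn.ne'
    exact (mul_eq_zero.mp hsum).resolve_left this
  apply Equiv.ext
  intro x
  rw [hconst, hzero]
  simp

lemma len_zero_eq_one {n : ℕ} (hn : 0 < n) {w : Equiv.Perm ℤ} (hwa : IsAffine n w)
    (hlen : affLen n w = 0) : w = 1 := by
  have hw := hwa.1
  have hfin := invSet_finite hn hw
  rw [affLen_eq] at hlen
  have hempty : InvSet n w = ∅ := (Set.ncard_eq_zero hfin).mp hlen
  apply mono_eq_one hn hwa
  intro x
  obtain ⟨c, hc⟩ := rep_dvd n x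
  have e1 : rep n x = x + (-c) * (n:ℤ) := by
    have : (-c) * (n:ℤ) = -((n:ℤ) * c) := by ring
    linarith
  have hnot : (rep n x, x + 1 + (-c) * (n:ℤ)) ∉ InvSet n w := by
    rw [hempty]; exact Set.notMem_empty _
  have hr1 := rep_one_le hn x
  have hr2 := rep_le hn x
  have hord : rep n x < x + 1 + (-c) * (n:ℤ) := by omega
  have hne : w (x + 1 + (-c) * (n:ℤ)) ≠ w (rep n x) := by
    intro heq
    have := w.injective heq
    omega
  have hnlt : ¬ (w (x + 1 + (-c) * (n:ℤ)) < w (rep n x)) := by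
    intro hlt
    exact hnot ⟨hr1, hr2, hord, hlt⟩
  have e2 : w (rep n x) = w x + (-c) * n := by rw [e1, equiv_mul hw]
  have e3 : w (x + 1 + (-c) * (n:ℤ)) = w (x+1) + (-c) * n := by
    rw [show x + 1 + (-c) * (n:ℤ) = (x + 1) + (-c) * n by ring, equiv_mul hw]
  rw [e2, e3] at hnlt hne
  omega

lemma exists_descent {n : ℕ} (hn : 0 < n) {w : Equiv.Perm ℤ} (hwa : IsAffine n w)
    (hne : w ≠ 1) : ∃ j : ℤ, w (j+1) < w j := by
  by_contra h
  push_neg at h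
  apply hne
  apply mono_eq_one hn hwa
  intro x
  have h1 := h x
  have h2 : w x ≠ w (x+1) := by
    intro heq
    have := w.injective heq
    omega
  omega
/- ### left multiplication criteria and commutation lemmas -/

lemma affLen_s_mul_of_asc {n : ℕ} (hn : 2 ≤ n) {w : Equiv.Perm ℤ} (hwa : IsAffine n w)
    {a : ℤ} (h : w⁻¹ a < w⁻¹ (a+1)) :
    affLen n (sPerm n a * w) = affLen n w + 1 := by
  have hn0 : 0 < n := by omega
  have hsw : IsAffine n (sPerm n a * w) := isAffine_mul hn0 (isAffine_s hn a) hwa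
  have h1 : (sPerm n a * w)⁻¹ = w⁻¹ * sPerm n a := by
    rw [mul_inv_rev, s_inv n hn a]
  have h2 := affLen_mul_s_of_asc hn (isAffine_inv hn0 hwa) (j := a) h
  calc affLen n (sPerm n a * w) = affLen n (sPerm n a * w)⁻¹ := (affLen_inv hn0 hsw).symm
    _ = affLen n (w⁻¹ * sPerm n a) := by rw [h1]
    _ = affLen n w⁻¹ + 1 := h2
    _ = affLen n w + 1 := by rw [affLen_inv hn0 hwa]

lemma affLen_s_mul_of_desc {n : ℕ} (hn : 2 ≤ n) {w : Equiv.Perm ℤ} (hwa : IsAffine n w)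
    {a : ℤ} (h : w⁻¹ (a+1) < w⁻¹ a) :
    affLen n w = affLen n (sPerm n a * w) + 1 := by
  have hn0 : 0 < n := by omega
  have hsw : IsAffine n (sPerm n a * w) := isAffine_mul hn0 (isAffine_s hn a) hwa
  have h1 : (sPerm n a * w)⁻¹ = w⁻¹ * sPerm n a := by
    rw [mul_inv_rev, s_inv n hn a]
  have h2 := affLen_mul_s_of_desc hn (isAffine_inv hn0 hwa) (j := a) h
  calc affLen n w = affLen n w⁻¹ := (affLen_inv hn0 hwa).symm
    _ = affLen n (w⁻¹ * sPerm n a) + 1 := h2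
    _ = affLen n (sPerm n a * w)⁻¹ + 1 := by rw [h1]
    _ = affLen n (sPerm n a * w) + 1 := by rw [affLen_inv hn0 hsw]

lemma swap_comm {n : ℕ} (hn : 2 ≤ n) {w : Equiv.Perm ℤ}
    (hw : ∀ x : ℤ, w (x + n) = w x + n) {a y : ℤ}
    (h1 : w⁻¹ a = y + 1) (h2 : w⁻¹ (a+1) = y) :
    sPerm n a * w = w * sPerm n y := by
  have hwy : w y = a + 1 := by rw [← h2, Equiv.Perm.apply_inv_self]
  have hwy1 : w (y+1) = a := by rw [← h1, Equiv.Perm.apply_inv_self]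
  apply Equiv.ext
  intro u
  simp only [Equiv.Perm.mul_apply]
  by_cases hd1 : (n:ℤ) ∣ u - y
  · obtain ⟨c, hc⟩ := hd1
    have hu : u = y + c * n := by linarith [mul_comm (n:ℤ) c]
    rw [sApp_of_dvd ⟨c, hc⟩]
    have e1 : w (u + 1) = a + c * n := by
      rw [hu, show y + c * (n:ℤ) + 1 = (y + 1) + c * n by ring, equiv_mul hw, hwy1]
    have e2 : w u = a + 1 + c * n := by
      rw [hu, equiv_mul hw, hwy]
    rw [e1, e2, sApp_of_dvd' hn (by rw [show a + 1 + c * (n:ℤ) - (a + 1) = c * n by ring]; exact ⟨c, by ring⟩)]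
    ring
  · by_cases hd2 : (n:ℤ) ∣ u - (y+1)
    · obtain ⟨c, hc⟩ := hd2
      have hu : u = y + 1 + c * n := by linarith [mul_comm (n:ℤ) c]
      rw [sApp_of_dvd' hn ⟨c, hc⟩]
      have e1 : w (u - 1) = a + 1 + c * n := by
        rw [hu, show y + 1 + c * (n:ℤ) - 1 = y + c * n by ring, equiv_mul hw, hwy]
      have e2 : w u = a + c * n := by
        rw [hu, show y + 1 + c * (n:ℤ) = (y + 1) + c * n by ring, equiv_mul hw, hwy1]
      rw [e1, e2, sApp_of_dvd (by rw [show a + c * (n:ℤ) - a = c * n by ring]; exact ⟨c, by ring⟩)]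
      ring
    · rw [sApp_of_not_dvd hd1 hd2]
      have hna : ¬ (n:ℤ) ∣ w u - a := by
        intro hdvd
        rw [← hwy1] at hdvd
        exact hd2 (mod_inj hw hdvd)
      have hna1 : ¬ (n:ℤ) ∣ w u - (a+1) := by
        intro hdvd
        rw [← hwy] at hdvd
        have := mod_inj hw hdvd
        exact hd1 this
      rw [sApp_of_not_dvd hna hna1]

lemma comm_of_fixed {n : ℕ} (hn : 2 ≤ n) {z : Equiv.Perm ℤ}
    (hz : ∀ x : ℤ, z (x + n) = z x + n) {i : ℤ}
    (hf1 : z i = i) (hf2 : z (i+1) = i+1) :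
    z * sPerm n i = sPerm n i * z := by
  apply Equiv.ext
  intro u
  simp only [Equiv.Perm.mul_apply]
  by_cases hd1 : (n:ℤ) ∣ u - i
  · obtain ⟨c, hc⟩ := hd1
    have hu : u = i + c * n := by linarith [mul_comm (n:ℤ) c]
    have e1 : z u = u := by
      rw [hu, equiv_mul hz, hf1]
    have e2 : z (u + 1) = u + 1 := by
      rw [hu, show i + c * (n:ℤ) + 1 = (i+1) + c * n by ring, equiv_mul hz, hf2]
    rw [sApp_of_dvd ⟨c, hc⟩, e1, e2, sApp_of_dvd ⟨c, hc⟩]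
  · by_cases hd2 : (n:ℤ) ∣ u - (i+1)
    · obtain ⟨c, hc⟩ := hd2
      have hu : u = i + 1 + c * n := by linarith [mul_comm (n:ℤ) c]
      have e1 : z u = u := by
        rw [hu, show i + 1 + c * (n:ℤ) = (i+1) + c * n by ring, equiv_mul hz, hf2]
      have e2 : z (u - 1) = u - 1 := by
        rw [hu, show i + 1 + c * (n:ℤ) - 1 = i + c * n by ring, equiv_mul hz, hf1]
      rw [sApp_of_dvd' hn ⟨c, hc⟩, e1, e2, sApp_of_dvd' hn ⟨c, hc⟩]
    · have hz1 : ¬ (n:ℤ) ∣ z u - i := by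
        intro hdvd
        rw [← hf1] at hdvd
        exact hd1 (mod_inj hz hdvd)
      have hz2 : ¬ (n:ℤ) ∣ z u - (i+1) := by
        intro hdvd
        rw [show i + 1 = ((i:ℤ)+1) from rfl, ← hf2] at hdvd
        exact hd2 (mod_inj hz hdvd)
      rw [sApp_of_not_dvd hd1 hd2, sApp_of_not_dvd hz1 hz2]
/- ### the left multiplication rule for the Demazure product -/

lemma left_rule {n : ℕ} (hn : 2 ≤ n) {D : Equiv.Perm ℤ → Equiv.Perm ℤ → Equiv.Perm ℤ}
    (hD : IsDemazure n D) :
    ∀ k : ℕ, ∀ w : Equiv.Perm ℤ, IsAffine n w → affLen n w = k → ∀ a : ℤ,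
      (w⁻¹ a < w⁻¹ (a+1) → D (sPerm n a) w = sPerm n a * w) ∧
      (w⁻¹ (a+1) < w⁻¹ a → D (sPerm n a) w = w) := by
  have hn0 : 0 < n := by omega
  obtain ⟨hassoc, hclosed, hid, hright⟩ := hD
  intro k
  induction k using Nat.strong_induction_on with
  | _ k IH =>
  intro w hw hlen a
  by_cases hw1 : w = 1
  · subst hw1
    constructor
    · intro _
      rw [(hid (sPerm n a) (isAffine_s hn a)).1]
      rw [mul_one]
    · intro hd
      exfalso
      simp only [inv_one, Equiv.Perm.one_apply] at hd
      omega
  · obtain ⟨j, hdesc⟩ := exists_descent hn0 hw hw1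
    have hta : IsAffine n (sPerm n j) := isAffine_s hn j
    have hsa : IsAffine n (sPerm n a) := isAffine_s hn a
    have hua : IsAffine n (w * sPerm n j) := isAffine_mul hn0 hw hta
    have hlu : affLen n w = affLen n (w * sPerm n j) + 1 := affLen_mul_s_of_desc hn hw hdesc
    have hut : (w * sPerm n j) * sPerm n j = w := by
      rw [mul_assoc, s_mul_self n hn j, mul_one]
    have hDut : D (w * sPerm n j) (sPerm n j) = w := by
      have h := (hright (w * sPerm n j) hua j).2 (by rw [hut]; omega)
      rw [hut] at h
      exact h
    have hDsw : D (sPerm n a) w = D (D (sPerm n a) (w * sPerm n j)) (sPerm n j) := by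
      conv_lhs => rw [← hDut]
      rw [← hassoc _ _ _ hsa hua hta]
    have hti : (sPerm n j)⁻¹ = sPerm n j := s_inv n hn j
    have hui : ∀ c : ℤ, (w * sPerm n j)⁻¹ c = sPerm n j (w⁻¹ c) := by
      intro c
      rw [mul_inv_rev, hti, Equiv.Perm.mul_apply]
    have hxy : w⁻¹ a ≠ w⁻¹ (a+1) := by
      intro h
      have := (w⁻¹ : Equiv.Perm ℤ).injective h
      omega
    have IHu := IH (affLen n (w * sPerm n j)) (by omega) (w * sPerm n j) hua rfl a
    constructor
    · -- ascent case
      intro hasc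
      rcases lt_trichotomy (sPerm n j (w⁻¹ a)) (sPerm n j (w⁻¹ (a+1))) with htlt | hteq | htgt
      · have hDsu : D (sPerm n a) (w * sPerm n j) = sPerm n a * (w * sPerm n j) :=
          IHu.1 (by rw [hui, hui]; exact htlt)
        have hlsu : affLen n (sPerm n a * (w * sPerm n j)) = affLen n (w * sPerm n j) + 1 :=
          affLen_s_mul_of_asc hn hua (by rw [hui, hui]; exact htlt)
        have hlsw : affLen n (sPerm n a * w) = affLen n w + 1 := affLen_s_mul_of_asc hn hw hasc
        have hsua : IsAffine n (sPerm n a * (w * sPerm n j)) := isAffine_mul hn0 hsa hua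
        have heq2 : sPerm n a * (w * sPerm n j) * sPerm n j = sPerm n a * w := by
          rw [mul_assoc, hut]
        have hfin : D (sPerm n a * (w * sPerm n j)) (sPerm n j)
            = sPerm n a * (w * sPerm n j) * sPerm n j := by
          apply (hright _ hsua j).2
          rw [heq2, hlsw, hlsu]
          omega
        rw [hDsw, hDsu, hfin, heq2]
      · exact absurd ((sPerm n j).injective hteq) hxy
      · exfalso
        have hd1 : affLen n (w * sPerm n j) = affLen n (sPerm n a * (w * sPerm n j)) + 1 :=
          affLen_s_mul_of_desc hn hua (by rw [hui, hui]; exact htgt)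
        have hlsw : affLen n (sPerm n a * w) = affLen n w + 1 := affLen_s_mul_of_asc hn hw hasc
        have hsua : IsAffine n (sPerm n a * (w * sPerm n j)) := isAffine_mul hn0 hsa hua
        have heq2 : sPerm n a * (w * sPerm n j) * sPerm n j = sPerm n a * w := by
          rw [mul_assoc, hut]
        rcases lt_trichotomy ((sPerm n a * (w * sPerm n j)) j) ((sPerm n a * (w * sPerm n j)) (j+1)) with hlt' | heq' | hgt'
        · have h5 := affLen_mul_s_of_asc hn hsua hlt'
          rw [heq2] at h5
          omega
        · have := (sPerm n a * (w * sPerm n j)).injective heq'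
          omega
        · have h5 := affLen_mul_s_of_desc hn hsua hgt'
          rw [heq2] at h5
          omega
    · -- descent case
      intro hdesc2
      rcases lt_trichotomy (sPerm n j (w⁻¹ a)) (sPerm n j (w⁻¹ (a+1))) with htlt | hteq | htgt
      · -- forced commutation case
        have hcx := s_close n j (w⁻¹ a)
        have hcy := s_close n j (w⁻¹ (a+1))
        have hx1 : w⁻¹ a = w⁻¹ (a+1) + 1 := by omega
        have hty : sPerm n j (w⁻¹ (a+1)) = w⁻¹ (a+1) + 1 := by omega
        have hdvd : (n:ℤ) ∣ w⁻¹ (a+1) - j := by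
          by_contra hnd
          by_cases h2 : (n:ℤ) ∣ w⁻¹ (a+1) - (j+1)
          · rw [sApp_of_dvd' hn h2] at hty; omega
          · rw [sApp_of_not_dvd hnd h2] at hty; omega
        have hteqs : sPerm n j = sPerm n (w⁻¹ (a+1)) := by
          apply s_congr
          rw [show j - w⁻¹ (a+1) = -(w⁻¹ (a+1) - j) by ring]
          exact (Int.dvd_neg).mpr hdvd
        have hswap : sPerm n a * w = w * sPerm n (w⁻¹ (a+1)) :=
          swap_comm hn hw.1 hx1 rfl
        have hswu : sPerm n a * w = w * sPerm n j := by rw [hswap, ← hteqs]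
        have hsau : sPerm n a * (w * sPerm n j) = w := by
          calc sPerm n a * (w * sPerm n j) = (sPerm n a * w) * sPerm n j := by rw [mul_assoc]
            _ = (w * sPerm n j) * sPerm n j := by rw [hswu]
            _ = w := hut
        have hDsu : D (sPerm n a) (w * sPerm n j) = sPerm n a * (w * sPerm n j) :=
          IHu.1 (by rw [hui, hui]; exact htlt)
        rw [hDsw, hDsu, hsau]
        exact (hright w hw j).1 (by omega)
      · exact absurd ((sPerm n j).injective hteq) hxy
      · have hDsu : D (sPerm n a) (w * sPerm n j) = w * sPerm n j :=
          IHu.2 (by rw [hui, hui]; exact htgt)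
        rw [hDsw, hDsu, hDut]

end DemAux

open DemAux

/-- Demazure conjugation formula: for `z ∈ Ĩ_n` and `i ∈ ℤ`,
`s_i ∘ z ∘ s_i = s_i z s_i` if `z i < z (i+1)` and `z s_i ≠ s_i z`;
`s_i ∘ z ∘ s_i = z s_i` if `z i < z (i+1)` and `z s_i = s_i z`;
`s_i ∘ z ∘ s_i = z` if `z i > z (i+1)`.  Moreover, when `z i < z (i+1)`,
`z s_i = s_i z` if and only if both `i` and `i+1` are fixed points of `z`. -/
theorem demazure_conjugation (n : ℕ) (hn : 2 ≤ n)
    (D : Equiv.Perm ℤ → Equiv.Perm ℤ → Equiv.Perm ℤ) (hD : IsDemazure n D)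
    (z : Equiv.Perm ℤ) (hz : IsAffine n z) (hzinv : ∀ x : ℤ, z (z x) = x) (i : ℤ) :
    (z i < z (i + 1) → z * sPerm n i ≠ sPerm n i * z →
      D (D (sPerm n i) z) (sPerm n i) = sPerm n i * z * sPerm n i) ∧
    (z i < z (i + 1) → z * sPerm n i = sPerm n i * z →
      D (D (sPerm n i) z) (sPerm n i) = z * sPerm n i) ∧
    (z (i + 1) < z i → D (D (sPerm n i) z) (sPerm n i) = z) ∧
    (z i < z (i + 1) →
      (z * sPerm n i = sPerm n i * z ↔ z i = i ∧ z (i + 1) = i + 1)) := by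
  have hn0 : 0 < n := by omega
  have hright := hD.2.2.2
  have hzinv' : z⁻¹ = z := by
    apply Equiv.ext; intro x
    apply z.injective
    rw [Equiv.Perm.apply_inv_self, hzinv]
  have hsz_affine : IsAffine n (sPerm n i * z) := isAffine_mul hn0 (isAffine_s hn i) hz
  have hL := left_rule hn hD (affLen n z) z hz rfl i
  have fixed_of : (n:ℤ) ∣ z i - i → z (i+1) = z i + 1 → z i = i ∧ z (i+1) = i + 1 := by
    intro hdvd hsucc
    obtain ⟨c, hc⟩ := hdvd
    have hzi : z i = i + c * n := by linarith [mul_comm (n:ℤ) c]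
    have h3 : z (z i) = z i + c * n := by
      conv_lhs => rw [hzi]
      rw [equiv_mul hz.1]
    have h4 := hzinv i
    omega
  have iff_comm : z i < z (i+1) →
      (z * sPerm n i = sPerm n i * z ↔ z i = i ∧ z (i + 1) = i + 1) := by
    intro hasc
    constructor
    · intro hcomm
      have h1 : z (sPerm n i i) = sPerm n i (z i) := by
        have h := congrArg (fun e : Equiv.Perm ℤ => e i) hcomm
        simpa [Equiv.Perm.mul_apply] using h
      have hsi : sPerm n i i = i + 1 := sApp_of_dvd (by simp)
      rw [hsi] at h1
      have hcl := s_close n i (z i)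
      have hszi : sPerm n i (z i) = z i + 1 := by omega
      have hsucc : z (i+1) = z i + 1 := by omega
      have hdvd : (n:ℤ) ∣ z i - i := by
        by_contra hnd
        by_cases h2 : (n:ℤ) ∣ z i - (i+1)
        · rw [sApp_of_dvd' hn h2] at hszi; omega
        · rw [sApp_of_not_dvd hnd h2] at hszi; omega
      exact fixed_of hdvd hsucc
    · rintro ⟨hf1, hf2⟩
      exact comm_of_fixed hn hz.1 hf1 hf2
  refine ⟨?_, ?_, ?_, iff_comm⟩
  · -- non-commuting ascent case
    intro hasc hne
    have hDsz : D (sPerm n i) z = sPerm n i * z := hL.1 (by rw [hzinv']; exact hasc)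
    have hslt : sPerm n i (z i) < sPerm n i (z (i+1)) := by
      rcases lt_trichotomy (sPerm n i (z i)) (sPerm n i (z (i+1))) with h | h | h
      · exact h
      · exfalso
        have := z.injective ((sPerm n i).injective h)
        omega
      · exfalso
        obtain ⟨hsucc, hdvd⟩ := s_flip hn hasc h
        obtain ⟨hf1, hf2⟩ := fixed_of hdvd hsucc
        exact hne (comm_of_fixed hn hz.1 hf1 hf2)
    have hasc2 : (sPerm n i * z) i < (sPerm n i * z) (i+1) := hslt
    have hlen2 : affLen n (sPerm n i * z * sPerm n i) = affLen n (sPerm n i * z) + 1 :=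
      affLen_mul_s_of_asc hn hsz_affine hasc2
    rw [hDsz]
    exact (hright (sPerm n i * z) hsz_affine i).2 (by omega)
  · -- commuting ascent case
    intro hasc hcomm
    have hDsz : D (sPerm n i) z = sPerm n i * z := hL.1 (by rw [hzinv']; exact hasc)
    obtain ⟨hf1, hf2⟩ := (iff_comm hasc).mp hcomm
    have e1 : (sPerm n i * z) i = i + 1 := by
      rw [Equiv.Perm.mul_apply, hf1, sApp_of_dvd (by simp)]
    have e2 : (sPerm n i * z) (i+1) = i := by
      rw [Equiv.Perm.mul_apply, hf2, sApp_of_dvd' hn (by simp)]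
      ring
    have hdesc2 : (sPerm n i * z) (i+1) < (sPerm n i * z) i := by omega
    have hlen2 : affLen n (sPerm n i * z)
        = affLen n ((sPerm n i * z) * sPerm n i) + 1 :=
      affLen_mul_s_of_desc hn hsz_affine hdesc2
    have hfin : D (sPerm n i * z) (sPerm n i) = sPerm n i * z :=
      (hright (sPerm n i * z) hsz_affine i).1 (by omega)
    rw [hDsz, hfin]
    exact hcomm.symm
  · -- descent case
    intro hdesc
    have hDsz : D (sPerm n i) z = z := hL.2 (by rw [hzinv']; exact hdesc)
    have hlen2 : affLen n z = affLen n (z * sPerm n i) + 1 :=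
      affLen_mul_s_of_desc hn hz hdesc
    rw [hDsz]
    exact (hright z hz i).1 (by omega)
end
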